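/- arXiv:2104.06228 — 9 statements merged into one kernel-verified Lean document; each statement's English description precedes it below -/
import Mathlib

section
/- Let p be an odd prime and let v ∈ ℚ_p be a p-adic unit (|v|_p = 1) that is not a square in ℚ_p. Let A = diag(1, -v, p) be the 3×3 diagonal matrix over ℚ_p. Then every matrix L ∈ M₃(ℚ_p) satisfying LᵀAL = A has all entries of p-adic absolute value at most 1; that is, all entries of L are p-adic integers. -/
lemma near_sq {p : ℕ} [Fact p.Prime] (hp : p ≠ 2) (v w : ℚ_[p])
    (hv : ‖v‖ ≤ 1) (hw : ‖w‖ = 1) (h : ‖w ^ 2 - v‖ < 1) : IsSquare v := by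
  set v' : ℤ_[p] := ⟨v, hv⟩ with hv'
  set w' : ℤ_[p] := ⟨w, hw.le⟩ with hw'
  have h2 : ‖(2 : ℤ_[p])‖ = 1 := by
    refine le_antisymm (PadicInt.norm_le_one _) (not_lt.1 fun hlt => ?_)
    have hd : ((p : ℤ)) ∣ 2 := (PadicInt.norm_int_lt_one_iff_dvd (2 : ℤ)).1 (by exact_mod_cast hlt)
    have hpd : p ∣ 2 := by exact_mod_cast hd
    rcases (Nat.prime_two.eq_one_or_self_of_dvd p hpd) with h1 | h1
    · exact (Fact.out : p.Prime).one_lt.ne' h1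
    · exact hp h1
  set F : Polynomial ℤ_[p] := Polynomial.X ^ 2 - Polynomial.C v' with hF
  have hder : F.derivative = 2 * Polynomial.X := by
    rw [hF]
    rw [Polynomial.derivative_sub, Polynomial.derivative_C, Polynomial.derivative_X_pow]
    simp
    exact map_ofNat Polynomial.C 2
  have hevd : F.derivative.eval w' = 2 * w' := by simp [hder]
  have hnorm : ‖F.eval w'‖ < ‖F.derivative.eval w'‖ ^ 2 := by
    rw [hevd]
    have : ‖(2 : ℤ_[p]) * w'‖ = 1 := by
      rw [norm_mul, h2, one_mul]
      exact hw
    rw [this, one_pow]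
    have heq : ‖F.eval w'‖ = ‖w ^ 2 - v‖ := by
      simp only [hF, Polynomial.eval_sub, Polynomial.eval_pow, Polynomial.eval_X,
        Polynomial.eval_C, PadicInt.norm_def]
      rfl
    rw [heq]; exact h
  obtain ⟨z, hz, -⟩ := hensels_lemma hnorm
  have hz' : (z : ℚ_[p]) ^ 2 = v := by
    have : z ^ 2 - v' = 0 := by simpa [hF] using hz
    have := congrArg (fun x : ℤ_[p] => (x : ℚ_[p])) this
    push_cast at this
    have hvv : ((v' : ℤ_[p]) : ℚ_[p]) = v := rfl
    exact sub_eq_zero.1 this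
  exact ⟨(z : ℚ_[p]), by rw [← hz']; ring⟩

lemma aniso {p : ℕ} [Fact p.Prime] (hp : p ≠ 2) (v : ℚ_[p]) (hv : ‖v‖ = 1)
    (hvsq : ¬ IsSquare v) (a b : ℚ_[p]) :
    ‖a ^ 2 - v * b ^ 2‖ = max ‖a‖ ‖b‖ ^ 2 := by
  have hnvb : ‖v * b ^ 2‖ = ‖b‖ ^ 2 := by rw [norm_mul, hv, one_mul, norm_pow]
  by_cases hab : ‖a‖ = ‖b‖
  · rw [hab, max_self]
    by_cases hb : b = 0
    · have ha : a = 0 := by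
        have := hab; rw [hb, norm_zero] at this
        exact norm_eq_zero.1 this
      simp [ha, hb]
    · -- w = a / b has norm 1
      have hbn : ‖b‖ ≠ 0 := norm_ne_zero_iff.2 hb
      set w : ℚ_[p] := a / b with hw
      have hwn : ‖w‖ = 1 := by
        rw [hw, norm_div, hab, div_self hbn]
      have key : ‖w ^ 2 - v‖ = 1 := by
        refine le_antisymm ?_ (not_lt.1 fun hlt => hvsq (near_sq hp v w hv.le hwn hlt))
        calc ‖w ^ 2 - v‖ = ‖w ^ 2 + (-v)‖ := by ring_nf
          _ ≤ max ‖w ^ 2‖ ‖-v‖ := Padic.nonarchimedean _ _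
          _ ≤ 1 := by
              rw [norm_neg, hv, norm_pow, hwn]; simp
      have hfac : a ^ 2 - v * b ^ 2 = (w ^ 2 - v) * b ^ 2 := by
        rw [hw, div_pow, sub_mul, div_mul_cancel₀ _ (pow_ne_zero 2 hb)]
      rw [hfac, norm_mul, key, one_mul, norm_pow]
  · rcases lt_or_gt_of_ne (fun h : ‖a ^ 2‖ = ‖v * b ^ 2‖ => hab (by
      rw [hnvb, norm_pow] at h
      exact pow_left_inj₀ (norm_nonneg _) (norm_nonneg _) two_ne_zero |>.1 h)) with h | h
    · have hmax : max ‖a‖ ‖b‖ = ‖b‖ := by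
        apply max_eq_right
        by_contra hc
        push_neg at hc
        have : ‖v * b ^ 2‖ < ‖a ^ 2‖ := by
          rw [hnvb, norm_pow]
          exact pow_lt_pow_left₀ hc (norm_nonneg _) two_ne_zero
        exact absurd h (not_lt.2 this.le)
      have : ‖a ^ 2 - v * b ^ 2‖ = ‖v * b ^ 2‖ := by
        rw [sub_eq_add_neg, Padic.add_eq_max_of_ne (by rw [norm_neg]; exact h.ne),
          norm_neg, max_eq_right h.le]
      rw [this, hnvb, hmax]
    · have hmax : max ‖a‖ ‖b‖ = ‖a‖ := by
        apply max_eq_left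
        by_contra hc
        push_neg at hc
        have : ‖a ^ 2‖ < ‖v * b ^ 2‖ := by
          rw [hnvb, norm_pow]
          exact pow_lt_pow_left₀ hc (norm_nonneg _) two_ne_zero
        exact absurd h (not_lt.2 this.le)
      have : ‖a ^ 2 - v * b ^ 2‖ = ‖a ^ 2‖ := by
        rw [sub_eq_add_neg, Padic.add_eq_max_of_ne (by rw [norm_neg]; exact h.ne'),
          norm_neg, max_eq_left h.le]
      rw [this, hmax, norm_pow]

lemma colbound {p : ℕ} [Fact p.Prime] (hp : p ≠ 2) (v : ℚ_[p]) (hv : ‖v‖ = 1)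
    (hvsq : ¬ IsSquare v) (a b c : ℚ_[p])
    (h : ‖a ^ 2 - v * b ^ 2 + (p : ℚ_[p]) * c ^ 2‖ ≤ 1) :
    ‖a‖ ≤ 1 ∧ ‖b‖ ≤ 1 ∧ ‖c‖ ≤ 1 := by
  have h1p : (1 : ℝ) < (p : ℝ) := by exact_mod_cast (Fact.out : p.Prime).one_lt
  have hpne : (p : ℚ_[p]) ≠ 0 := by
    exact_mod_cast Nat.cast_ne_zero.2 (Fact.out : p.Prime).ne_zero
  set S := a ^ 2 - v * b ^ 2 with hSdef
  set T := (p : ℚ_[p]) * c ^ 2 with hTdef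
  have hS : ‖S‖ = max ‖a‖ ‖b‖ ^ 2 := aniso hp v hv hvsq a b
  have maxbound : ‖S‖ ≤ 1 → ‖a‖ ≤ 1 ∧ ‖b‖ ≤ 1 := by
    intro hS1
    rw [hS] at hS1
    have : max ‖a‖ ‖b‖ ≤ 1 :=
      (pow_le_one_iff_of_nonneg (le_max_of_le_left (norm_nonneg a)) two_ne_zero).1 hS1
    exact ⟨le_trans (le_max_left _ _) this, le_trans (le_max_right _ _) this⟩
  by_cases hc : c = 0
  · have hT0 : T = 0 := by simp [hTdef, hc]
    rw [hT0, add_zero] at h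
    exact ⟨(maxbound h).1, (maxbound h).2, by simp [hc]⟩
  · have hT : T ≠ 0 := mul_ne_zero hpne (pow_ne_zero _ hc)
    have hvalT : T.valuation = 1 + 2 * c.valuation := by
      rw [hTdef, Padic.valuation_mul hpne (pow_ne_zero _ hc), Padic.valuation_p]
      congr 1
      rw [sq, Padic.valuation_mul hc hc]
      ring
    have hnormT : ‖T‖ = (p : ℝ) ^ (-(1 + 2 * c.valuation)) := by
      rw [Padic.norm_eq_zpow_neg_valuation hT, hvalT]
    have hne : ‖S‖ ≠ ‖T‖ := by
      intro heq
      by_cases hS0 : S = 0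
      · rw [hS0, norm_zero] at heq
        exact hT (norm_eq_zero.1 heq.symm)
      · -- max ‖a‖ ‖b‖ is ‖a‖ or ‖b‖, nonzero
        have hmaxne : max ‖a‖ ‖b‖ ≠ 0 := by
          intro h0
          exact hS0 (norm_eq_zero.1 (by rw [hS, h0]; norm_num))
        rcases max_choice ‖a‖ ‖b‖ with hm | hm
        · have ha : a ≠ 0 := by
            intro h0; exact hmaxne (by rw [hm, h0, norm_zero])
          rw [hS, hm, Padic.norm_eq_zpow_neg_valuation ha, ← zpow_natCast, ← zpow_mul, hnormT] at heq
          have := (zpow_right_strictMono₀ h1p).injective heq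
          omega
        · have hb : b ≠ 0 := by
            intro h0; exact hmaxne (by rw [hm, h0, norm_zero])
          rw [hS, hm, Padic.norm_eq_zpow_neg_valuation hb, ← zpow_natCast, ← zpow_mul, hnormT] at heq
          have := (zpow_right_strictMono₀ h1p).injective heq
          omega
    have hmax : ‖S + T‖ = max ‖S‖ ‖T‖ := Padic.add_eq_max_of_ne hne
    rw [hmax, max_le_iff] at h
    obtain ⟨hS1, hT1⟩ := h
    have hcval : 0 ≤ c.valuation := by
      rw [Padic.norm_le_one_iff_val_nonneg, hvalT] at hT1
      omega
    exact ⟨(maxbound hS1).1, (maxbound hS1).2,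
      (Padic.norm_le_one_iff_val_nonneg c).2 hcval⟩



open Matrix

/-- For an odd prime `p` and a p-adic unit `v` that is not a square,
every matrix `L` with `Lᵀ A L = A` for `A = diag(1, -v, p)` has all entries in `ℤ_p`,
i.e. of p-adic norm at most 1. -/
theorem entries_integral_of_orthogonal_odd
    (p : ℕ) [Fact p.Prime] (hp : p ≠ 2)
    (v : ℚ_[p]) (hv : ‖v‖ = 1) (hvsq : ¬ IsSquare v)
    (A : Matrix (Fin 3) (Fin 3) ℚ_[p])
    (hA : A = Matrix.diagonal ![1, -v, (p : ℚ_[p])])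
    (L : Matrix (Fin 3) (Fin 3) ℚ_[p])
    (hL : Lᵀ * A * L = A) :
    ∀ i j, ‖L i j‖ ≤ 1 := by
  subst hA
  intro i j
  have key := congrFun (congrFun hL j) j
  have expand : (Lᵀ * Matrix.diagonal ![1, -v, (p : ℚ_[p])] * L) j j
      = L 0 j ^ 2 - v * L 1 j ^ 2 + (p : ℚ_[p]) * L 2 j ^ 2 := by
    simp [Matrix.mul_apply, Fin.sum_univ_three, Matrix.diagonal_apply, Matrix.transpose_apply]
    ring
  rw [expand] at key
  have hrhs : ‖Matrix.diagonal ![1, -v, (p : ℚ_[p])] j j‖ ≤ 1 := by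
    fin_cases j <;>
      simp [Matrix.diagonal_apply, hv, Padic.norm_p,
        inv_le_one_iff₀]
    · exact Or.inr (by exact_mod_cast (Fact.out : p.Prime).one_lt.le)
  rw [← key] at hrhs
  obtain ⟨h0, h1, h2⟩ := colbound hp v hv hvsq _ _ _ hrhs
  fin_cases i
  · exact h0
  · exact h1
  · exact h2
end

section
/- Every matrix L ∈ M₃(ℚ_2) satisfying LᵀL = I (the 3×3 identity matrix) has all entries of 2-adic absolute value at most 1; that is, all entries of L are 2-adic integers. -/
open Matrix

lemma zmod4_aux : ∀ s t : ZMod (2^2), 1 + s^2 + t^2 ≠ 0 := by decide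

lemma one_add_sq_norm (x y : ℚ_[2]) (hx : ‖x‖ ≤ 1) (hy : ‖y‖ ≤ 1) :
    (1/4 : ℝ) < ‖1 + x^2 + y^2‖ := by
  set X : ℤ_[2] := ⟨x, hx⟩
  set Y : ℤ_[2] := ⟨y, hy⟩
  have h2 : ¬ ‖(1 + X^2 + Y^2 : ℤ_[2])‖ ≤ ((2:ℕ) : ℝ)^(-(2:ℕ) : ℤ) := by
    rw [PadicInt.norm_le_pow_iff_mem_span_pow, ← PadicInt.ker_toZModPow, RingHom.mem_ker]
    simp only [map_add, map_pow, _root_.map_one]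
    exact zmod4_aux _ _
  push_neg at h2
  have he : (((2:ℕ):ℝ))^(-(2:ℕ) : ℤ) = 1/4 := by norm_num
  rw [he] at h2
  have hc : ‖(1 + X^2 + Y^2 : ℤ_[2])‖ = ‖(1 + x^2 + y^2 : ℚ_[2])‖ := by
    rw [PadicInt.norm_def]
    push_cast
    rfl
  rwa [hc] at h2

lemma key_max (a b c : ℚ_[2]) (h : a^2 + b^2 + c^2 = 1)
    (hb : ‖b‖ ≤ ‖a‖) (hc : ‖c‖ ≤ ‖a‖) : ‖a‖ ≤ 1 := by
  by_contra h1
  push_neg at h1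
  have ha0 : a ≠ 0 := by
    intro h0; rw [h0, norm_zero] at h1; linarith
  have ha2 : (2:ℝ) ≤ ‖a‖ := by
    rw [Padic.norm_eq_zpow_neg_valuation ha0] at h1 ⊢
    have hcast : (((2:ℕ):ℝ)) = (2:ℝ) := by norm_num
    rw [hcast] at h1 ⊢
    have : (0:ℤ) < -a.valuation := by
      by_contra hv
      push_neg at hv
      have := zpow_le_one_of_nonpos₀ (by norm_num : (1:ℝ) ≤ 2) hv
      linarith
    calc (2:ℝ) = (2:ℝ)^(1:ℤ) := by norm_num
      _ ≤ (2:ℝ)^(-a.valuation) := by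
          apply zpow_le_zpow_right₀ (by norm_num) (by omega)
  have hu : ‖b/a‖ ≤ 1 := by
    rw [norm_div]; exact div_le_one_of_le₀ hb (norm_nonneg a)
  have hv : ‖c/a‖ ≤ 1 := by
    rw [norm_div]; exact div_le_one_of_le₀ hc (norm_nonneg a)
  have hfac : 1 + (b/a)^2 + (c/a)^2 = (a^2)⁻¹ := by
    field_simp
    linear_combination h
  have hgt := one_add_sq_norm (b/a) (c/a) hu hv
  rw [hfac, norm_inv, norm_pow] at hgt
  have h4 : (4:ℝ) ≤ ‖a‖^2 := by nlinarith
  have hpos : (0:ℝ) < ‖a‖^2 := by positivity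
  have : (‖a‖^2)⁻¹ ≤ 1/4 := by
    rw [inv_le_comm₀ hpos (by norm_num)]; linarith
  linarith

lemma all_le (a b c : ℚ_[2]) (h : a^2 + b^2 + c^2 = 1) :
    ‖a‖ ≤ 1 ∧ ‖b‖ ≤ 1 ∧ ‖c‖ ≤ 1 := by
  rcases le_total ‖a‖ ‖b‖ with h1 | h1 <;> rcases le_total ‖b‖ ‖c‖ with h2 | h2 <;>
    rcases le_total ‖a‖ ‖c‖ with h3 | h3
  · have := key_max c a b (by linear_combination h) (by linarith) (by linarith)
    exact ⟨by linarith, by linarith, this⟩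
  · have := key_max c a b (by linear_combination h) (by linarith) (by linarith)
    exact ⟨by linarith, by linarith, this⟩
  · have := key_max b a c (by linear_combination h) (by linarith) (by linarith)
    exact ⟨by linarith, this, by linarith⟩
  · have := key_max b a c (by linear_combination h) (by linarith) (by linarith)
    exact ⟨by linarith, this, by linarith⟩
  · have := key_max c a b (by linear_combination h) (by linarith) (by linarith)
    exact ⟨by linarith, by linarith, this⟩
  · have := key_max a b c h (by linarith) (by linarith)
    exact ⟨this, by linarith, by linarith⟩
  · have := key_max a b c h (by linarith) (by linarith)
    exact ⟨this, by linarith, by linarith⟩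
  · have := key_max a b c h (by linarith) (by linarith)
    exact ⟨this, by linarith, by linarith⟩

/-- Every matrix `L` over `ℚ_2` with `Lᵀ L = I` has all entries of
2-adic norm at most 1, i.e. all entries are 2-adic integers. -/
theorem entries_integral_of_orthogonal_two
    (L : Matrix (Fin 3) (Fin 3) ℚ_[2])
    (hL : Lᵀ * L = 1) :
    ∀ i j, ‖L i j‖ ≤ 1 := by
  intro i j
  have hcol : (L 0 j)^2 + (L 1 j)^2 + (L 2 j)^2 = 1 := by
    have := congrFun (congrFun hL j) j
    simp [Matrix.mul_apply, Matrix.one_apply, Fin.sum_univ_three, transpose_apply] at this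
    linear_combination this
  obtain ⟨h0, h1, h2⟩ := all_le _ _ _ hcol
  fin_cases i <;> assumption
end

section
/- Let p be an odd prime and let v ∈ ℚ_p be a p-adic unit that is not a square in ℚ_p, and let A = diag(1, -v, p). Then the set SO(3)_p = {L ∈ M₃(ℚ_p) : LᵀAL = A and det L = 1} is a compact subset of the space of 3×3 matrices over ℚ_p (with the topology induced by the p-adic absolute value on each entry). -/
open Matrix

section aux
variable (p : ℕ) [Fact p.Prime]

lemma two_norm_eq_one (hp : p ≠ 2) : ‖(2 : ℚ_[p])‖ = 1 := by
  have h1 : ‖((2:ℤ) : ℚ_[p])‖ ≤ 1 := Padic.norm_int_le_one _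
  have h2 : ¬ ‖((2:ℤ) : ℚ_[p])‖ < 1 := by
    rw [Padic.norm_intCast_lt_one_iff]
    intro h
    have h1 := Int.le_of_dvd (by norm_num) h
    have h2 := (Fact.out : p.Prime).two_le
    omega
  push_cast at h1 h2
  linarith [lt_or_eq_of_le h1 |>.resolve_left h2]

lemma isSquare_of_close (hp : p ≠ 2) (v : ℚ_[p]) (hv : ‖v‖ = 1)
    (c : ℚ_[p]) (hc : ‖c‖ ≤ 1) (h : ‖c ^ 2 - v‖ < 1) : IsSquare v := by
  have hc1 : ‖c‖ = 1 := by
    have : ‖c ^ 2‖ = 1 := by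
      have hne : ‖c ^ 2 - v‖ ≠ ‖v‖ := by rw [hv]; exact ne_of_lt h
      have := Padic.add_eq_max_of_ne hne
      simp only [sub_add_cancel] at this
      rw [this, hv, max_eq_right (le_of_lt (hv ▸ h))]
    rw [norm_pow] at this
    nlinarith [norm_nonneg c]
  set C : ℤ_[p] := ⟨c, hc⟩ with hC
  set V : ℤ_[p] := ⟨v, le_of_eq hv⟩ with hV
  set F : Polynomial ℤ_[p] := Polynomial.X ^ 2 - Polynomial.C V with hF
  have hevalF : ∀ z : ℤ_[p], F.eval z = z ^ 2 - V := by intro z; simp [hF]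
  have hder : F.derivative = Polynomial.C 2 * Polynomial.X := by
    simp [hF, Polynomial.derivative_X_pow]
    rw [← Polynomial.C_1, ← Polynomial.C_add, one_add_one_eq_two]
  have hderiv : ∀ z : ℤ_[p], F.derivative.eval z = 2 * z := by
    intro z; rw [hder]; simp
  have hnorm : ‖F.eval C‖ < ‖F.derivative.eval C‖ ^ 2 := by
    rw [hevalF, hderiv]
    have e1 : ‖C ^ 2 - V‖ = ‖c ^ 2 - v‖ := by
      rw [PadicInt.norm_def]; push_cast; rfl
    have e2 : ‖(2 : ℤ_[p]) * C‖ = 1 := by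
      have : ‖(2 : ℤ_[p]) * C‖ = ‖(2 : ℚ_[p]) * c‖ := by
        rw [PadicInt.norm_def]; push_cast; rfl
      rw [this, norm_mul, two_norm_eq_one p hp, hc1, one_mul]
    rw [e1, e2, one_pow]; exact h
  obtain ⟨z, hz, -⟩ := hensels_lemma hnorm
  rw [Polynomial.coe_aeval_eq_eval, hevalF, sub_eq_zero] at hz
  refine ⟨(z : ℚ_[p]), ?_⟩
  have : ((z ^ 2 : ℤ_[p]) : ℚ_[p]) = ((V : ℤ_[p]) : ℚ_[p]) := by rw [hz]
  push_cast at this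
  exact this.symm.trans (sq _)

lemma key_norm (hp : p ≠ 2) (v : ℚ_[p]) (hv : ‖v‖ = 1) (hvsq : ¬ IsSquare v)
    (a b : ℚ_[p]) : ‖a ^ 2 - v * b ^ 2‖ = max ‖a‖ ‖b‖ ^ 2 := by
  have hvb : ∀ x : ℚ_[p], ‖v * x ^ 2‖ = ‖x‖ ^ 2 := by
    intro x; rw [norm_mul, hv, one_mul, norm_pow]
  rcases lt_trichotomy ‖a‖ ‖b‖ with hlt | heq | hgt
  · have hne : ‖a ^ 2‖ ≠ ‖-(v * b ^ 2)‖ := by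
      rw [norm_neg, hvb, norm_pow]
      nlinarith [norm_nonneg a, norm_nonneg b]
    have := Padic.add_eq_max_of_ne hne
    rw [← sub_eq_add_neg] at this
    rw [this, norm_neg, hvb, norm_pow, max_eq_right_of_lt hlt,
      max_eq_right (by nlinarith [norm_nonneg a, norm_nonneg b])]
  · rw [heq, max_self]
    rcases eq_or_ne ‖b‖ 0 with hb0 | hb0
    · have hb : b = 0 := norm_eq_zero.mp hb0
      have ha : a = 0 := norm_eq_zero.mp (heq.trans hb0)
      simp [ha, hb]
    · -- ‖a‖ = ‖b‖ ≠ 0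
      have hb : b ≠ 0 := fun h => hb0 (by simp [h])
      have hle : ‖a ^ 2 - v * b ^ 2‖ ≤ ‖b‖ ^ 2 := by
        calc ‖a ^ 2 - v * b ^ 2‖ = ‖a ^ 2 + -(v * b ^ 2)‖ := by rw [sub_eq_add_neg]
        _ ≤ max ‖a ^ 2‖ ‖-(v * b ^ 2)‖ := Padic.nonarchimedean _ _
        _ ≤ ‖b‖ ^ 2 := by rw [norm_neg, hvb, norm_pow, heq, max_self]
      rcases lt_or_eq_of_le hle with hlt2 | heq2
      · exfalso
        apply hvsq
        apply isSquare_of_close p hp v hv (a / b)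
        · rw [norm_div, heq]; exact le_of_eq (div_self hb0)
        · have hrw : (a / b) ^ 2 - v = (a ^ 2 - v * b ^ 2) / b ^ 2 := by
            field_simp
          rw [hrw, norm_div, norm_pow]
          rw [div_lt_one (by positivity)]
          exact hlt2
      · exact heq2
  · have hne : ‖a ^ 2‖ ≠ ‖-(v * b ^ 2)‖ := by
      rw [norm_neg, hvb, norm_pow]
      nlinarith [norm_nonneg a, norm_nonneg b]
    have := Padic.add_eq_max_of_ne hne
    rw [← sub_eq_add_neg] at this
    rw [this, norm_neg, hvb, norm_pow, max_eq_left_of_lt hgt,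
      max_eq_left (by nlinarith [norm_nonneg a, norm_nonneg b])]

end aux

section aux2
variable (p : ℕ) [Fact p.Prime]

-- norm of a nonzero p-adic is an integer power of p
lemma norm_is_zpow (x : ℚ_[p]) (hx : x ≠ 0) : ∃ k : ℤ, ‖x‖ = (p : ℝ) ^ k :=
  ⟨-x.valuation, Padic.norm_eq_zpow_neg_valuation hx⟩

lemma lower_bound (hp : p ≠ 2) (v : ℚ_[p]) (hv : ‖v‖ = 1) (hvsq : ¬ IsSquare v)
    (x : Fin 3 → ℚ_[p]) :
    (p : ℝ)⁻¹ * max (max ‖x 0‖ ‖x 1‖) ‖x 2‖ ^ 2 ≤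
      ‖x 0 ^ 2 - v * x 1 ^ 2 + (p : ℚ_[p]) * x 2 ^ 2‖ := by
  have hp1 : (1 : ℝ) ≤ (p : ℝ) := by
    exact_mod_cast Nat.one_le_iff_ne_zero.mpr (Fact.out : p.Prime).pos.ne'
  have hppos : (0 : ℝ) < (p : ℝ) := by linarith
  have hα : ‖x 0 ^ 2 - v * x 1 ^ 2‖ = max ‖x 0‖ ‖x 1‖ ^ 2 :=
    key_norm p hp v hv hvsq (x 0) (x 1)
  have hβ : ‖(p : ℚ_[p]) * x 2 ^ 2‖ = (p : ℝ)⁻¹ * ‖x 2‖ ^ 2 := by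
    rw [norm_mul, norm_pow, Padic.norm_p]
  set u : ℝ := max ‖x 0‖ ‖x 1‖ with hu
  have hune : u ^ 2 ≠ (p : ℝ)⁻¹ * ‖x 2‖ ^ 2 ∨ (u = 0 ∧ ‖x 2‖ = 0) := by
    rcases eq_or_ne u 0 with hu0 | hu0
    · rcases eq_or_ne ‖x 2‖ 0 with h20 | h20
      · exact Or.inr ⟨hu0, h20⟩
      · left; intro hc
        rw [hu0] at hc
        have h2p : 0 < ‖x 2‖ := (norm_nonneg _).lt_of_ne' h20
        have : (0:ℝ) < (p : ℝ)⁻¹ * ‖x 2‖ ^ 2 := by positivity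
        nlinarith
    · rcases eq_or_ne ‖x 2‖ 0 with h20 | h20
      · left; intro hc
        rw [h20] at hc
        have hup : 0 < u := (le_max_left _ _ |>.trans' (norm_nonneg _)).lt_of_ne' hu0
        nlinarith
      · -- both nonzero: powers of p with different parity
        left
        have hx2 : x 2 ≠ 0 := fun h => h20 (by simp [h])
        have humem : ∃ k : ℤ, u = (p : ℝ) ^ k := by
          rcases max_cases ‖x 0‖ ‖x 1‖ with ⟨h, -⟩ | ⟨h, -⟩
          · rw [hu, h]
            exact norm_is_zpow p (x 0) (fun h0 => hu0 (by rw [hu, h, h0]; simp))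
          · rw [hu, h]
            exact norm_is_zpow p (x 1) (fun h0 => hu0 (by rw [hu, h, h0]; simp))
        obtain ⟨s, hs⟩ := humem
        obtain ⟨t, ht⟩ := norm_is_zpow p (x 2) hx2
        rw [hs, ht]
        intro hc
        have hgt1 : (1 : ℝ) < (p : ℝ) := by
          exact_mod_cast (Fact.out : p.Prime).one_lt
        have e1 : ((p:ℝ) ^ s) ^ 2 = (p:ℝ) ^ (s + s) := by
          rw [zpow_add₀ hppos.ne', sq]
        have e2 : ((p:ℝ) ^ t) ^ 2 = (p:ℝ) ^ (t + t) := by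
          rw [zpow_add₀ hppos.ne', sq]
        have e3 : (p:ℝ)⁻¹ * (p:ℝ) ^ (t + t) = (p:ℝ) ^ (t + t - 1) := by
          rw [zpow_sub₀ hppos.ne', zpow_one]; ring
        rw [e1, e2, e3] at hc
        have := zpow_right_injective₀ hppos hgt1.ne' hc
        omega
  rcases hune with hne | ⟨hu0, h20⟩
  · -- norms differ: ultrametric equality
    have hne' : ‖x 0 ^ 2 - v * x 1 ^ 2‖ ≠ ‖(p : ℚ_[p]) * x 2 ^ 2‖ := by
      rw [hα, hβ]; exact hne
    have heq := Padic.add_eq_max_of_ne hne'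
    rw [heq, hα, hβ]
    have hb1 : (p : ℝ)⁻¹ * u ^ 2 ≤ u ^ 2 := by
      have hu2 : (0:ℝ) ≤ u ^ 2 := sq_nonneg u
      nlinarith [inv_le_one_of_one_le₀ hp1]
    have hb2 : (p : ℝ)⁻¹ * ‖x 2‖ ^ 2 ≤ max (u ^ 2) ((p : ℝ)⁻¹ * ‖x 2‖ ^ 2) :=
      le_max_right _ _
    have hb3 : (p : ℝ)⁻¹ * u ^ 2 ≤ max (u ^ 2) ((p : ℝ)⁻¹ * ‖x 2‖ ^ 2) :=
      hb1.trans (le_max_left _ _)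
    rcases max_cases u ‖x 2‖ with ⟨h, -⟩ | ⟨h, -⟩ <;> rw [h]
    · exact hb3
    · exact hb2
  · -- everything is zero
    rw [hu0, h20]
    simp

end aux2

/-- For an odd prime `p` and a p-adic unit `v` that is not a square,
the group `SO(3)_p = {L : Lᵀ A L = A, det L = 1}` with `A = diag(1, -v, p)` is a
compact subset of the space of 3×3 matrices over `ℚ_p`. -/
theorem so3p_isCompact
    (p : ℕ) [Fact p.Prime] (hp : p ≠ 2)
    (v : ℚ_[p]) (hv : ‖v‖ = 1) (hvsq : ¬ IsSquare v)
    (A : Matrix (Fin 3) (Fin 3) ℚ_[p])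
    (hA : A = Matrix.diagonal ![1, -v, (p : ℚ_[p])]) :
    IsCompact {L : Matrix (Fin 3) (Fin 3) ℚ_[p] | Lᵀ * A * L = A ∧ L.det = 1} := by
  have hp1 : (1 : ℝ) ≤ (p : ℝ) := by
    exact_mod_cast (Fact.out : p.Prime).one_lt.le
  -- the big compact box
  have hK : IsCompact {L : Matrix (Fin 3) (Fin 3) ℚ_[p] | ∀ i j, ‖L i j‖ ≤ (p : ℝ)} := by
    have h : {L : Matrix (Fin 3) (Fin 3) ℚ_[p] | ∀ i j, ‖L i j‖ ≤ (p : ℝ)} =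
        Set.univ.pi (fun _ : Fin 3 =>
          Set.univ.pi (fun _ : Fin 3 => Metric.closedBall (0 : ℚ_[p]) p)) := by
      ext L
      constructor
      · intro h
        exact Set.mem_univ_pi.mpr fun i => Set.mem_univ_pi.mpr fun j => by
          simpa [dist_zero_right] using h i j
      · intro h i j
        have := Set.mem_univ_pi.mp (Set.mem_univ_pi.mp h i) j
        simpa [dist_zero_right] using this
    rw [h]
    exact isCompact_univ_pi fun i => isCompact_univ_pi fun j =>
      isCompact_closedBall _ _
  -- the set is closed
  have hclosed : IsClosed {L : Matrix (Fin 3) (Fin 3) ℚ_[p] | Lᵀ * A * L = A ∧ L.det = 1} := by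
    have : {L : Matrix (Fin 3) (Fin 3) ℚ_[p] | Lᵀ * A * L = A ∧ L.det = 1} =
        {L : Matrix (Fin 3) (Fin 3) ℚ_[p] | Lᵀ * A * L = A} ∩
        {L : Matrix (Fin 3) (Fin 3) ℚ_[p] | L.det = 1} := rfl
    rw [this]
    apply IsClosed.inter
    · exact isClosed_eq
        (((continuous_id.matrix_transpose).matrix_mul continuous_const).matrix_mul
          continuous_id) continuous_const
    · exact isClosed_eq (continuous_id.matrix_det) continuous_const
  -- containment
  apply hK.of_isClosed_subset hclosed
  rintro L ⟨hL, -⟩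
  intro i j
  set x : Fin 3 → ℚ_[p] := fun i => L i j with hx
  have e : x 0 ^ 2 - v * x 1 ^ 2 + (p : ℚ_[p]) * x 2 ^ 2 = A j j := by
    have h := congrFun (congrFun hL j) j
    rw [hA] at h
    rw [Matrix.diagonal_apply_eq] at h
    rw [Matrix.mul_apply] at h
    simp only [Matrix.mul_diagonal, Matrix.transpose_apply] at h
    rw [Fin.sum_univ_three] at h
    rw [hA, Matrix.diagonal_apply_eq, ← h]
    simp only [hx, Matrix.cons_val_zero, Matrix.cons_val_one, Matrix.head_cons,
      Matrix.cons_val_two, Matrix.tail_cons]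
    ring
  have hAle : ‖A j j‖ ≤ 1 := by
    fin_cases j
    · simp [hA]
    · simp [hA, hv]
    · simp [hA, Padic.norm_p]
      rw [inv_le_one₀ (by positivity)]
      exact hp1
  have hlb := lower_bound p hp v hv hvsq x
  rw [e] at hlb
  set m : ℝ := max (max ‖x 0‖ ‖x 1‖) ‖x 2‖ with hm
  have hm0 : 0 ≤ m := le_trans (norm_nonneg _) (le_max_right _ _)
  have hm2 : m ^ 2 ≤ (p : ℝ) := by
    have hpinv : (0:ℝ) < (p : ℝ)⁻¹ := by positivity
    have : (p : ℝ)⁻¹ * m ^ 2 ≤ 1 := le_trans hlb hAle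
    calc m ^ 2 = (p : ℝ) * ((p : ℝ)⁻¹ * m ^ 2) := by
          field_simp
      _ ≤ (p : ℝ) * 1 := by
          apply mul_le_mul_of_nonneg_left this (by positivity)
      _ = (p : ℝ) := mul_one _
  have hxi : ‖x i‖ ≤ m := by
    fin_cases i
    · exact le_trans (le_max_left _ _) (le_max_left _ _)
    · exact le_trans (le_max_right _ _) (le_max_left _ _)
    · exact le_max_right _ _
  show ‖x i‖ ≤ (p : ℝ)
  rcases le_or_gt m 1 with h1 | h1
  · linarith
  · nlinarith
end

section
/- Let p be an odd prime, v ∈ ℚ_p a p-adic unit that is not a square in ℚ_p, A = diag(1, -v, p), Q_+(x) = xᵀAx and B(x,y) = xᵀAy. Let (v₁, v₂, v₃) and (w₁, w₂, w₃) be two bases of ℚ_p³, each pairwise orthogonal with respect to B (i.e., B(vᵢ, vⱼ) = 0 and B(wᵢ, wⱼ) = 0 for all i ≠ j). Then there exists M ∈ M₃(ℚ_p) with MᵀAM = A and M vᵢ = wᵢ for i = 1, 2, 3 if and only if Q_+(vᵢ) = Q_+(wᵢ) for i = 1, 2, 3. Moreover, when this condition holds, there exists such an M which additionally has det M = 1 and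 maps (v₁, v₂, v₃) either to (w₁, w₂, w₃) or to (w₁, −w₂, w₃). -/
open Matrix

private lemma conj_apply' {n K : Type*} [Fintype n] [CommRing K]
    (P C Q : Matrix n n K) (i j : n) :
    (Pᵀ * C * Q) i j = (fun k => P k i) ⬝ᵥ C *ᵥ (fun k => Q k j) := by
  simp only [Matrix.mul_apply, Matrix.mulVec, Matrix.transpose_apply, dotProduct,
    Finset.sum_mul, Finset.mul_sum]
  rw [Finset.sum_comm]
  congr 1; ext k; congr 1; ext l; ring

/-- For two orthogonal bases `(v₁,v₂,v₃)` and `(w₁,w₂,w₃)` of `ℚ_p³`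
(with respect to the bilinear form of `A = diag(1,-v,p)`), there is an orthogonal
`M` with `M vᵢ = wᵢ` iff `Q₊(vᵢ) = Q₊(wᵢ)` for all `i`; moreover in that case such
an `M` can be chosen special (`det M = 1`), mapping `(v₁,v₂,v₃)` either to
`(w₁,w₂,w₃)` or to `(w₁,-w₂,w₃)`. -/
theorem orthogonal_basis_transport
    (p : ℕ) [Fact p.Prime] (hp : p ≠ 2)
    (v : ℚ_[p]) (hv : ‖v‖ = 1) (hvsq : ¬ IsSquare v)
    (A : Matrix (Fin 3) (Fin 3) ℚ_[p])
    (hA : A = Matrix.diagonal ![1, -v, (p : ℚ_[p])])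
    (Q : (Fin 3 → ℚ_[p]) → ℚ_[p]) (hQ : ∀ x, Q x = x ⬝ᵥ A.mulVec x)
    (B : (Fin 3 → ℚ_[p]) → (Fin 3 → ℚ_[p]) → ℚ_[p])
    (hB : ∀ x y, B x y = x ⬝ᵥ A.mulVec y)
    (V W : Fin 3 → (Fin 3 → ℚ_[p]))
    (hVbasis : LinearIndependent ℚ_[p] V)
    (hWbasis : LinearIndependent ℚ_[p] W)
    (hVorth : ∀ i j, i ≠ j → B (V i) (V j) = 0)
    (hWorth : ∀ i j, i ≠ j → B (W i) (W j) = 0) :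
    ((∃ M : Matrix (Fin 3) (Fin 3) ℚ_[p], Mᵀ * A * M = A ∧
        ∀ i, M.mulVec (V i) = W i) ↔ (∀ i, Q (V i) = Q (W i))) ∧
    ((∀ i, Q (V i) = Q (W i)) →
      ∃ M : Matrix (Fin 3) (Fin 3) ℚ_[p], Mᵀ * A * M = A ∧ M.det = 1 ∧
        ((∀ i, M.mulVec (V i) = W i) ∨
         (M.mulVec (V 0) = W 0 ∧ M.mulVec (V 1) = -(W 1) ∧ M.mulVec (V 2) = W 2))) := by
  classical
  have hv0 : v ≠ 0 := by intro h; rw [h] at hv; simp at hv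
  have hp0 : (p : ℚ_[p]) ≠ 0 := Nat.cast_ne_zero.mpr (Fact.out (p := p.Prime)).pos.ne'
  have hAdet : A.det ≠ 0 := by
    rw [hA, Matrix.det_diagonal, Fin.prod_univ_three]
    simp only [Matrix.cons_val_zero, Matrix.cons_val_one, Matrix.head_cons,
      Matrix.cons_val_two, Matrix.tail_cons]
    simp [hv0, hp0]
  -- the general "inner product via matrices" fact
  have hdot : ∀ (M : Matrix (Fin 3) (Fin 3) ℚ_[p]) (x y : Fin 3 → ℚ_[p]),
      (M *ᵥ x) ⬝ᵥ A *ᵥ (M *ᵥ y) = x ⬝ᵥ (Mᵀ * A * M) *ᵥ y := by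
    intro M x y
    rw [← Matrix.mulVec_mulVec, ← Matrix.mulVec_mulVec, Matrix.dotProduct_mulVec x,
      Matrix.vecMul_transpose, Matrix.mulVec_mulVec]
  -- column matrices
  set PV : Matrix (Fin 3) (Fin 3) ℚ_[p] := Matrix.of (fun i j => V j i) with hPV
  set PW : Matrix (Fin 3) (Fin 3) ℚ_[p] := Matrix.of (fun i j => W j i) with hPW
  have h3 : Fintype.card (Fin 3) = Module.finrank ℚ_[p] (Fin 3 → ℚ_[p]) := by simp
  have instPV : Invertible PV := by
    have : PV = (Pi.basisFun ℚ_[p] (Fin 3)).toMatrix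
        (basisOfLinearIndependentOfCardEqFinrank hVbasis h3) := by
      ext i j
      simp [hPV, Module.Basis.toMatrix_apply, coe_basisOfLinearIndependentOfCardEqFinrank]
    rw [this]
    exact (Pi.basisFun ℚ_[p] (Fin 3)).invertibleToMatrix _
  have instPW : Invertible PW := by
    have : PW = (Pi.basisFun ℚ_[p] (Fin 3)).toMatrix
        (basisOfLinearIndependentOfCardEqFinrank hWbasis h3) := by
      ext i j
      simp [hPW, Module.Basis.toMatrix_apply, coe_basisOfLinearIndependentOfCardEqFinrank]
    rw [this]
    exact (Pi.basisFun ℚ_[p] (Fin 3)).invertibleToMatrix _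
  have hPVcol : ∀ i, PV *ᵥ Pi.single i 1 = V i := by
    intro i; ext k; simp [hPV]
  have cancel : ∀ X Y : Matrix (Fin 3) (Fin 3) ℚ_[p],
      PVᵀ * X * PV = PVᵀ * Y * PV → X = Y := by
    intro X Y h
    have h2 := congrArg (fun Z => ⅟(PVᵀ) * Z * ⅟PV) h
    simpa [Matrix.mul_assoc, Matrix.invOf_mul_cancel_left,
      Matrix.invOf_mul_cancel_right] using h2
  have hVconj : ∀ i j, (PVᵀ * A * PV) i j = B (V i) (V j) := by
    intro i j; rw [conj_apply', hB]; rfl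
  have hWconj : ∀ i j, (PWᵀ * A * PW) i j = B (W i) (W j) := by
    intro i j; rw [conj_apply', hB]; rfl
  -- key diagonal comparison
  have key : (∀ i, Q (V i) = Q (W i)) → PWᵀ * A * PW = PVᵀ * A * PV := by
    intro hQVW
    ext i j
    rw [hVconj, hWconj]
    by_cases h : i = j
    · subst h
      have := hQVW i
      rw [hQ, hQ] at this
      rw [hB, hB, ← this]
    · rw [hVorth i j h, hWorth i j h]
  -- the standard map M0
  set M0 : Matrix (Fin 3) (Fin 3) ℚ_[p] := PW * ⅟PV with hM0
  have hM0PV : M0 * PV = PW := by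
    rw [hM0, Matrix.mul_assoc, invOf_mul_self, Matrix.mul_one]
  have hM0V : ∀ i, M0 *ᵥ V i = W i := by
    intro i
    rw [← hPVcol i, Matrix.mulVec_mulVec, hM0PV]
    ext k; simp [hPW]
  have conj3 : ∀ M : Matrix (Fin 3) (Fin 3) ℚ_[p],
      PVᵀ * (Mᵀ * A * M) * PV = (M * PV)ᵀ * A * (M * PV) := by
    intro M
    rw [Matrix.transpose_mul]
    simp only [Matrix.mul_assoc]
  have hM0A : (∀ i, Q (V i) = Q (W i)) → M0ᵀ * A * M0 = A := by
    intro hQVW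
    apply cancel
    rw [conj3, hM0PV, key hQVW]
  -- det M * det M = 1 for any orthogonal M
  have hdetpm : ∀ M : Matrix (Fin 3) (Fin 3) ℚ_[p], Mᵀ * A * M = A →
      M.det = 1 ∨ M.det = -1 := by
    intro M hM
    have h1 := congrArg Matrix.det hM
    rw [Matrix.det_mul, Matrix.det_mul, Matrix.det_transpose] at h1
    have h2 : (M.det * M.det) * A.det = 1 * A.det := by linear_combination h1
    exact mul_self_eq_one_iff.mp (mul_right_cancel₀ hAdet h2)
  refine ⟨⟨?_, fun hQVW => ⟨M0, hM0A hQVW, hM0V⟩⟩, ?_⟩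
  · rintro ⟨M, hMA, hMV⟩ i
    rw [hQ, hQ, ← hMV i, hdot, hMA]
  · intro hQVW
    have hMA := hM0A hQVW
    rcases hdetpm M0 hMA with hd | hd
    · exact ⟨M0, hMA, hd, Or.inl hM0V⟩
    · -- flip the sign of the second vector
      set D : Matrix (Fin 3) (Fin 3) ℚ_[p] := Matrix.diagonal ![1, -1, 1] with hD
      set M1 : Matrix (Fin 3) (Fin 3) ℚ_[p] := PW * D * ⅟PV with hM1
      have hM1PV : M1 * PV = PW * D := by
        rw [hM1, Matrix.mul_assoc, invOf_mul_self, Matrix.mul_one]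
      have hDW : PWᵀ * A * PW * D = D * (PWᵀ * A * PW) := by
        ext i j
        rw [Matrix.mul_diagonal, Matrix.diagonal_mul]
        by_cases h : i = j
        · subst h; ring
        · rw [hWconj, hWorth i j h]; ring
      have hDsq : D * D = 1 := by
        rw [hD, Matrix.diagonal_mul_diagonal]
        ext i j
        fin_cases i <;> fin_cases j <;> simp [Matrix.one_apply]
      have hM1A : M1ᵀ * A * M1 = A := by
        apply cancel
        have hDT : Dᵀ = D := by rw [hD, Matrix.diagonal_transpose]
        rw [conj3, hM1PV, Matrix.transpose_mul, hDT]
        calc D * PWᵀ * A * (PW * D)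
            = D * (PWᵀ * A * PW * D) := by simp only [Matrix.mul_assoc]
          _ = D * (D * (PWᵀ * A * PW)) := by rw [hDW]
          _ = (D * D) * (PWᵀ * A * PW) := by simp only [Matrix.mul_assoc]
          _ = PWᵀ * A * PW := by rw [hDsq, Matrix.one_mul]
          _ = PVᵀ * A * PV := key hQVW
      have hDdet : D.det = -1 := by
        rw [hD, Matrix.det_diagonal, Fin.prod_univ_three]; norm_num; rfl
      have hM1det : M1.det = 1 := by
        have e0 : M0.det = PW.det * (⅟PV).det := by
          rw [hM0, Matrix.det_mul]
        have e1 : M1.det = PW.det * D.det * (⅟PV).det := by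
          rw [hM1, Matrix.det_mul, Matrix.det_mul]
        rw [e1, hDdet]
        have : PW.det * (⅟PV).det = -1 := by rw [← e0, hd]
        linear_combination -this
      refine ⟨M1, hM1A, hM1det, Or.inr ⟨?_, ?_, ?_⟩⟩
      · rw [← hPVcol 0, Matrix.mulVec_mulVec, hM1PV]
        ext k
        simp [hPW, hD, Matrix.mul_apply, Matrix.diagonal, Matrix.mulVec, dotProduct,
          Fin.sum_univ_three]
      · rw [← hPVcol 1, Matrix.mulVec_mulVec, hM1PV]
        ext k
        simp [hPW, hD, Matrix.mul_apply, Matrix.diagonal, Matrix.mulVec, dotProduct,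
          Fin.sum_univ_three]
      · rw [← hPVcol 2, Matrix.mulVec_mulVec, hM1PV]
        ext k
        simp [hPW, hD, Matrix.mul_apply, Matrix.diagonal, Matrix.mulVec, dotProduct,
          Fin.sum_univ_three]
end

section
/- Let p be an odd prime, v ∈ ℚ_p a p-adic unit that is not a square in ℚ_p, A = diag(1, -v, p), Q_+(x) = xᵀAx, B(x,y) = xᵀAy, and SO(3)_p = {L ∈ M₃(ℚ_p) : LᵀAL = A, det L = 1}. Let n ∈ ℚ_p³ be nonzero, and let x, y ∈ ℚ_p³ be nonzero vectors with B(n, x) = 0 and B(n, y) = 0. Then there exists R ∈ SO(3)_p with R n = n and R x = y if and only if Q_+(x) = Q_+(y). -/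
lemma aux_norm_two {p : ℕ} [Fact p.Prime] (hp : p ≠ 2) : ‖(2 : ℚ_[p])‖ = 1 := by
  have h1 : ‖((2:ℤ) : ℚ_[p])‖ ≤ 1 := Padic.norm_int_le_one 2
  have h2 : ¬ ‖((2:ℤ) : ℚ_[p])‖ < 1 := by
    rw [Padic.norm_intCast_lt_one_iff]
    intro hdvd
    have hle := Int.le_of_dvd (by norm_num) hdvd
    have := (Fact.out : p.Prime).two_le
    omega
  push_cast at h1 h2
  linarith [lt_or_eq_of_le h1]

lemma aux_norm_sq_sub {p : ℕ} [Fact p.Prime] (hp : p ≠ 2)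
    {v t : ℚ_[p]} (hv : ‖v‖ = 1) (hvsq : ¬ IsSquare v) (ht : ‖t‖ = 1) :
    ‖t^2 - v‖ = 1 := by
  have hle : ‖t^2 - v‖ ≤ 1 := by
    have h := Padic.nonarchimedean (t^2) (-v)
    rw [← sub_eq_add_neg] at h
    simpa [norm_neg, ht, hv] using h
  rcases lt_or_eq_of_le hle with hlt | heq
  · exfalso
    set T : ℤ_[p] := ⟨t, ht.le⟩ with hT
    set V : ℤ_[p] := ⟨v, hv.le⟩ with hV
    set F : Polynomial ℤ_[p] := Polynomial.X^2 - Polynomial.C V with hF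
    have hevF : F.eval T = T^2 - V := by simp [hF]
    have hevF' : F.derivative.eval T = 2 * T := by
      simp [hF]
      norm_num
    have hnT : ‖(T : ℚ_[p])‖ = 1 := ht
    have hcoe : ((T^2 - V : ℤ_[p]) : ℚ_[p]) = t^2 - v := by push_cast; rfl
    have hnorm : ‖F.eval T‖ < ‖F.derivative.eval T‖ ^ 2 := by
      rw [hevF, hevF']
      have e1 : ‖(T^2 - V : ℤ_[p])‖ = ‖t^2 - v‖ := by
        rw [PadicInt.norm_def, hcoe]
      have e2 : ‖(2 * T : ℤ_[p])‖ = 1 := by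
        rw [PadicInt.norm_def]
        push_cast
        have h2 : ((2:ℤ_[p]) : ℚ_[p]) = 2 := by norm_cast
        rw [h2, norm_mul, aux_norm_two hp, hnT]; ring
      rw [e1, e2]; simpa using hlt
    obtain ⟨z, hz, -⟩ := hensels_lemma hnorm
    apply hvsq
    have hzv : z^2 = V := by
      have : z^2 - V = 0 := by simpa [hF] using hz
      exact sub_eq_zero.mp this
    refine ⟨(z : ℚ_[p]), ?_⟩
    have := congrArg (fun w : ℤ_[p] => (w : ℚ_[p])) hzv
    push_cast at this
    rw [sq] at this; exact this.symm
  · exact heq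

lemma aux_norm_key {p : ℕ} [Fact p.Prime] (hp : p ≠ 2)
    {v : ℚ_[p]} (hv : ‖v‖ = 1) (hvsq : ¬ IsSquare v) (a b : ℚ_[p]) :
    ‖a^2 - v*b^2‖ = (max ‖a‖ ‖b‖)^2 := by
  rcases eq_or_ne ‖a‖ ‖b‖ with he | hne
  · rcases eq_or_ne b 0 with rfl | hb
    · have ha : a = 0 := by simpa using he
      subst ha; simp
    · have hb' : ‖b‖ ≠ 0 := by simpa using hb
      have hsplit : a^2 - v*b^2 = b^2 * ((a/b)^2 - v) := by field_simp
      rw [hsplit, norm_mul, norm_pow]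
      have htd : ‖a/b‖ = 1 := by rw [norm_div, he, div_self hb']
      rw [aux_norm_sq_sub hp hv hvsq htd, he, max_self]; ring
  · have h2 : ‖a^2‖ ≠ ‖-(v*b^2)‖ := by
      rw [norm_neg, norm_mul, norm_pow, norm_pow, hv, one_mul]
      intro h
      apply hne
      nlinarith [norm_nonneg a, norm_nonneg b]
    have h3 := Padic.add_eq_max_of_ne h2
    rw [← sub_eq_add_neg] at h3
    rw [h3, norm_neg, norm_mul, norm_pow, norm_pow, hv, one_mul]
    rcases le_total ‖a‖ ‖b‖ with h | h
    · rw [max_eq_right h, max_eq_right (by nlinarith [norm_nonneg a] : ‖a‖^2 ≤ ‖b‖^2)]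
    · rw [max_eq_left h, max_eq_left (by nlinarith [norm_nonneg b] : ‖b‖^2 ≤ ‖a‖^2)]

lemma aux_aniso {p : ℕ} [Fact p.Prime] (hp : p ≠ 2) {v : ℚ_[p]} (hv : ‖v‖ = 1)
    (hvsq : ¬ IsSquare v) {z0 z1 z2 : ℚ_[p]}
    (h : z0^2 - v*z1^2 + (p:ℚ_[p])*z2^2 = 0) : z0 = 0 ∧ z1 = 0 ∧ z2 = 0 := by
  have hkey := aux_norm_key hp hv hvsq z0 z1
  have hp0 : (0:ℝ) < (p:ℝ) := by exact_mod_cast (Fact.out : p.Prime).pos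
  have hp1 : (p:ℝ) ≠ 1 := by
    have h2 := (Fact.out : p.Prime).two_le
    exact_mod_cast (by omega : (p:ℕ) ≠ 1)
  by_cases h2 : z2 = 0
  · subst h2
    have hz : z0^2 - v*z1^2 = 0 := by linear_combination h
    rw [hz, norm_zero] at hkey
    have hmax : max ‖z0‖ ‖z1‖ = 0 := by nlinarith [le_max_left ‖z0‖ ‖z1‖, norm_nonneg z0, norm_nonneg z1, le_max_right ‖z0‖ ‖z1‖]
    constructor
    · have : ‖z0‖ = 0 := le_antisymm (hmax ▸ le_max_left _ _) (norm_nonneg _)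
      simpa using this
    constructor
    · have : ‖z1‖ = 0 := le_antisymm (hmax ▸ le_max_right _ _) (norm_nonneg _)
      simpa using this
    · rfl
  · exfalso
    have hs : z0^2 - v*z1^2 = -((p:ℚ_[p])*z2^2) := by linear_combination h
    have heq : (max ‖z0‖ ‖z1‖)^2 = ‖(p:ℚ_[p])‖ * ‖z2‖^2 := by
      rw [← hkey, hs, norm_neg, norm_mul, norm_pow]
    have hz2n : ‖z2‖ = (p:ℝ) ^ (-z2.valuation) := Padic.norm_eq_zpow_neg_valuation h2
    have hpn : ‖(p:ℚ_[p])‖ = (p:ℝ) ^ (-1 : ℤ) := by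
      rw [Padic.norm_p, zpow_neg_one]
    have hfin : ∀ c : ℚ_[p], c ≠ 0 → max ‖z0‖ ‖z1‖ = ‖c‖ → False := by
      intro c hc hmc
      have hcn : ‖c‖ = (p:ℝ) ^ (-c.valuation) := Padic.norm_eq_zpow_neg_valuation hc
      rw [hmc, hcn, hz2n, hpn, sq, sq, ← zpow_add₀ (ne_of_gt hp0),
        ← zpow_add₀ (ne_of_gt hp0), ← zpow_add₀ (ne_of_gt hp0)] at heq
      have := zpow_right_injective₀ hp0 hp1 heq
      omega
    rcases le_total ‖z0‖ ‖z1‖ with hle | hle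
    · have hz1 : z1 ≠ 0 := by
        intro hz1; apply h2
        rw [hz1, norm_zero] at hle
        have h0 : ‖z0‖ = 0 := le_antisymm hle (norm_nonneg _)
        have hm0 : max ‖z0‖ ‖z1‖ = 0 := by rw [h0, hz1, norm_zero, max_self]
        rw [hm0] at heq
        have hpn0 : (0:ℝ) < ‖(p:ℚ_[p])‖ := by rw [hpn]; positivity
        have : ‖z2‖ = 0 := by
          by_contra hne
          have hpos : 0 < ‖z2‖ := lt_of_le_of_ne (norm_nonneg _) (Ne.symm hne)
          nlinarith [mul_pos hpn0 (pow_pos hpos 2)]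
        simpa using this
      exact hfin z1 hz1 (max_eq_right hle)
    · have hz0 : z0 ≠ 0 := by
        intro hz0; apply h2
        rw [hz0, norm_zero] at hle
        have h0 : ‖z1‖ = 0 := le_antisymm hle (norm_nonneg _)
        have hm0 : max ‖z0‖ ‖z1‖ = 0 := by rw [h0, hz0, norm_zero, max_self]
        rw [hm0] at heq
        have hpn0 : (0:ℝ) < ‖(p:ℚ_[p])‖ := by rw [hpn]; positivity
        have : ‖z2‖ = 0 := by
          by_contra hne
          have hpos : 0 < ‖z2‖ := lt_of_le_of_ne (norm_nonneg _) (Ne.symm hne)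
          nlinarith [mul_pos hpn0 (pow_pos hpos 2)]
        simpa using this
      exact hfin z0 hz0 (max_eq_left hle)

open Matrix

set_option maxHeartbeats 2000000 in
/-- Given a nonzero axis `n` and nonzero vectors `x, y` orthogonal to
`n` (w.r.t. the bilinear form of `A = diag(1,-v,p)`), there is a rotation
`R ∈ SO(3)_p` fixing `n` with `R x = y` iff `Q₊(x) = Q₊(y)`. -/
theorem exists_rotation_around_axis_iff
    (p : ℕ) [Fact p.Prime] (hp : p ≠ 2)
    (v : ℚ_[p]) (hv : ‖v‖ = 1) (hvsq : ¬ IsSquare v)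
    (A : Matrix (Fin 3) (Fin 3) ℚ_[p])
    (hA : A = Matrix.diagonal ![1, -v, (p : ℚ_[p])])
    (Q : (Fin 3 → ℚ_[p]) → ℚ_[p]) (hQ : ∀ z, Q z = z ⬝ᵥ A.mulVec z)
    (B : (Fin 3 → ℚ_[p]) → (Fin 3 → ℚ_[p]) → ℚ_[p])
    (hB : ∀ z w, B z w = z ⬝ᵥ A.mulVec w)
    (n : Fin 3 → ℚ_[p]) (hn : n ≠ 0)
    (x y : Fin 3 → ℚ_[p]) (hx : x ≠ 0) (hy : y ≠ 0)
    (hnx : B n x = 0) (hny : B n y = 0) :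
    (∃ R : Matrix (Fin 3) (Fin 3) ℚ_[p], Rᵀ * A * R = A ∧ R.det = 1 ∧
      R.mulVec n = n ∧ R.mulVec x = y) ↔ Q x = Q y := by
  have hBe : ∀ z w : Fin 3 → ℚ_[p],
      B z w = z 0 * w 0 - v * (z 1 * w 1) + (p:ℚ_[p]) * (z 2 * w 2) := by
    intro z w
    rw [hB, hA]
    simp [Matrix.mulVec, dotProduct, Fin.sum_univ_three, Matrix.diagonal]
    ring
  have hQe : ∀ z : Fin 3 → ℚ_[p],
      Q z = z 0 ^ 2 - v * z 1 ^ 2 + (p:ℚ_[p]) * z 2 ^ 2 := by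
    intro z
    rw [hQ, hA]
    simp [Matrix.mulVec, dotProduct, Fin.sum_univ_three, Matrix.diagonal]
    ring
  have haniso : ∀ z : Fin 3 → ℚ_[p], z ≠ 0 → Q z ≠ 0 := by
    intro z hz hQz
    rw [hQe] at hQz
    obtain ⟨h0, h1, h2⟩ := aux_aniso hp hv hvsq (z0 := z 0) (z1 := z 1) (z2 := z 2) hQz
    exact hz (funext fun i => by fin_cases i <;> assumption)
  constructor
  · rintro ⟨R, hR1, hR2, hR3, hR4⟩
    rw [hQ, hQ, ← hR4]
    have hent : ∀ i j, (Rᵀ * A * R) i j = A i j := fun i j => by rw [hR1]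
    have h00 := hent 0 0
    have h01 := hent 0 1
    have h02 := hent 0 2
    have h10 := hent 1 0
    have h11 := hent 1 1
    have h12 := hent 1 2
    have h20 := hent 2 0
    have h21 := hent 2 1
    have h22 := hent 2 2
    simp [Matrix.mul_apply, Matrix.transpose_apply, Fin.sum_univ_three] at h00
    simp [Matrix.mul_apply, Matrix.transpose_apply, Fin.sum_univ_three] at h01
    simp [Matrix.mul_apply, Matrix.transpose_apply, Fin.sum_univ_three] at h02
    simp [Matrix.mul_apply, Matrix.transpose_apply, Fin.sum_univ_three] at h10
    simp [Matrix.mul_apply, Matrix.transpose_apply, Fin.sum_univ_three] at h11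
    simp [Matrix.mul_apply, Matrix.transpose_apply, Fin.sum_univ_three] at h12
    simp [Matrix.mul_apply, Matrix.transpose_apply, Fin.sum_univ_three] at h20
    simp [Matrix.mul_apply, Matrix.transpose_apply, Fin.sum_univ_three] at h21
    simp [Matrix.mul_apply, Matrix.transpose_apply, Fin.sum_univ_three] at h22
    simp only [Matrix.mulVec, dotProduct, Fin.sum_univ_three]
    linear_combination -(x 0 * x 0 * h00 + x 0 * x 1 * h01 + x 0 * x 2 * h02 + x 1 * x 0 * h10 + x 1 * x 1 * h11 + x 1 * x 2 * h12 + x 2 * x 0 * h20 + x 2 * x 1 * h21 + x 2 * x 2 * h22)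
  · intro hQxy
    have hvne : v ≠ 0 := fun h => by simp [h] at hv
    have hpne : (p:ℚ_[p]) ≠ 0 := Nat.cast_ne_zero.mpr (Fact.out : p.Prime).ne_zero
    set QN := n 0 ^ 2 - v * n 1 ^ 2 + (p:ℚ_[p]) * n 2 ^ 2 with hQN
    set QX := x 0 ^ 2 - v * x 1 ^ 2 + (p:ℚ_[p]) * x 2 ^ 2 with hQX
    have hQNne : QN ≠ 0 := by rw [hQN, ← hQe]; exact haniso n hn
    have hQXne : QX ≠ 0 := by rw [hQX, ← hQe]; exact haniso x hx
    have hnx' : n 0 * x 0 - v * (n 1 * x 1) + (p:ℚ_[p]) * (n 2 * x 2) = 0 := by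
      rw [← hBe]; exact hnx
    have hny' : n 0 * y 0 - v * (n 1 * y 1) + (p:ℚ_[p]) * (n 2 * y 2) = 0 := by
      rw [← hBe]; exact hny
    set w : Fin 3 → ℚ_[p] :=
      ![n 1 * x 2 - n 2 * x 1, -(n 2 * x 0 - n 0 * x 2) / v,
        (n 0 * x 1 - n 1 * x 0) / (p:ℚ_[p])] with hwdef
    have hw0 : w 0 = n 1 * x 2 - n 2 * x 1 := by simp [hwdef]
    have hw1 : v * w 1 = -(n 2 * x 0 - n 0 * x 2) := by
      simp only [hwdef]
      show v * (-(n 2 * x 0 - n 0 * x 2) / v) = _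
      field_simp
    have hw2 : (p:ℚ_[p]) * w 2 = n 0 * x 1 - n 1 * x 0 := by
      simp only [hwdef]
      show (p:ℚ_[p]) * ((n 0 * x 1 - n 1 * x 0) / (p:ℚ_[p])) = _
      field_simp
    set QW := w 0 ^ 2 - v * w 1 ^ 2 + (p:ℚ_[p]) * w 2 ^ 2 with hQW
    have hnw' : n 0 * w 0 - v * (n 1 * w 1) + (p:ℚ_[p]) * (n 2 * w 2) = 0 := by
      linear_combination n 0 * hw0 - n 1 * hw1 + n 2 * hw2
    have hxw' : x 0 * w 0 - v * (x 1 * w 1) + (p:ℚ_[p]) * (x 2 * w 2) = 0 := by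
      linear_combination x 0 * hw0 - x 1 * hw1 + x 2 * hw2
    have hQWid : QW * (-v * (p:ℚ_[p])) = QN * QX -
        (n 0 * x 0 - v * (n 1 * x 1) + (p:ℚ_[p]) * (n 2 * x 2)) ^ 2 := by
      have e : QW * (-v * (p:ℚ_[p])) =
          -v * (p:ℚ_[p]) * (w 0)^2 + (p:ℚ_[p]) * (v * w 1)^2 - v * ((p:ℚ_[p]) * w 2)^2 := by
        rw [hQW]; ring
      rw [hw0, hw1, hw2] at e
      rw [e, hQN, hQX]; ring
    have hQWne : QW ≠ 0 := by
      intro h0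
      rw [h0, hnx', zero_mul] at hQWid
      have : QN * QX = 0 := by linear_combination -hQWid
      exact (mul_ne_zero hQNne hQXne) this
    set P : Matrix (Fin 3) (Fin 3) ℚ_[p] := Matrix.of fun i j => ![n, x, w] j i with hP
    have hG : Pᵀ * A * P = Matrix.diagonal ![QN, QX, QW] := by
      rw [hA]
      ext i j
      fin_cases i <;> fin_cases j <;>
        simp [hP, Matrix.mul_apply, Fin.sum_univ_three, Matrix.diagonal] <;>
        first
          | linear_combination -hQN
          | linear_combination -hQX
          | linear_combination -hQW
          | linear_combination hnx'
          | linear_combination hnw'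
          | linear_combination hxw'
    have hdetP : P.det * P.det * (-v * (p:ℚ_[p])) = QN * (QX * QW) := by
      have h := congrArg Matrix.det hG
      rw [hA] at h
      simp [Matrix.det_mul, Matrix.det_transpose, Matrix.det_diagonal,
        Fin.prod_univ_three] at h
      linear_combination h
    have hPdne : P.det ≠ 0 := by
      intro h0
      rw [h0, zero_mul, zero_mul] at hdetP
      exact (mul_ne_zero hQNne (mul_ne_zero hQXne hQWne)) hdetP.symm
    have hu : IsUnit P.det := isUnit_iff_ne_zero.mpr hPdne
    have hPP : P * P⁻¹ = 1 := Matrix.mul_nonsing_inv P hu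
    have hPiP : P⁻¹ * P = 1 := Matrix.nonsing_inv_mul P hu
    obtain ⟨c, hc⟩ : ∃ c : Fin 3 → ℚ_[p], c = P⁻¹.mulVec y := ⟨_, rfl⟩
    have hyc : P.mulVec c = y := by
      rw [hc, Matrix.mulVec_mulVec, hPP, Matrix.one_mulVec]
    have hy0 : y 0 = n 0 * c 0 + x 0 * c 1 + w 0 * c 2 := by
      rw [← hyc]; simp [hP, Matrix.mulVec, dotProduct, Fin.sum_univ_three]
    have hy1 : y 1 = n 1 * c 0 + x 1 * c 1 + w 1 * c 2 := by
      rw [← hyc]; simp [hP, Matrix.mulVec, dotProduct, Fin.sum_univ_three]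
    have hy2 : y 2 = n 2 * c 0 + x 2 * c 1 + w 2 * c 2 := by
      rw [← hyc]; simp [hP, Matrix.mulVec, dotProduct, Fin.sum_univ_three]
    have hc0' : c 0 * QN = 0 := by
      rw [hQN]
      linear_combination hny' - n 0 * hy0 + v * n 1 * hy1 - (p:ℚ_[p]) * n 2 * hy2 -
        c 1 * hnx' - c 2 * hnw'
    have hc0 : c 0 = 0 := (mul_eq_zero.mp hc0').resolve_right hQNne
    rw [hc0] at hy0 hy1 hy2
    simp only [mul_zero, zero_add] at hy0 hy1 hy2
    have hkey : c 1 ^ 2 * QX + c 2 ^ 2 * QW = QX := by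
      rw [hQX, hQW]
      have hq := hQxy
      rw [hQe, hQe] at hq
      linear_combination -hq - (y 0 + (x 0 * c 1 + w 0 * c 2)) * hy0 +
        v * (y 1 + (x 1 * c 1 + w 1 * c 2)) * hy1 -
        (p:ℚ_[p]) * (y 2 + (x 2 * c 1 + w 2 * c 2)) * hy2 -
        (2 * c 1 * c 2) * hxw'
    obtain ⟨α, hαdef⟩ : ∃ α : ℚ_[p], α = -(c 2 * QW) / QX := ⟨_, rfl⟩
    have hα : α * QX = -(c 2 * QW) := by
      rw [hαdef]; field_simp
    set M : Matrix (Fin 3) (Fin 3) ℚ_[p] :=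
      Matrix.of ![![1,0,0], ![0, c 1, α], ![0, c 2, c 1]] with hM
    have h22 : α ^ 2 * QX + c 1 ^ 2 * QW = QW := by
      apply mul_right_cancel₀ hQXne
      linear_combination (α * QX - c 2 * QW) * hα + QW * hkey
    have hMT : Mᵀ = Matrix.of ![![1,0,0], ![0, c 1, c 2], ![0, α, c 1]] := by
      ext i j
      fin_cases i <;> fin_cases j <;> rfl
    have hDdiag : Matrix.diagonal ![QN, QX, QW] =
        Matrix.of ![![QN,0,0], ![0,QX,0], ![(0:ℚ_[p]),0,QW]] := by
      ext i j
      fin_cases i <;> fin_cases j <;>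
        simp [Matrix.diagonal, Matrix.vecHead, Matrix.vecTail]
    have hG2 : Mᵀ * Matrix.diagonal ![QN, QX, QW] * M = Matrix.diagonal ![QN, QX, QW] := by
      rw [hMT, hDdiag]
      ext i j
      fin_cases i <;> fin_cases j <;>
        simp [hM, Matrix.mul_apply, Fin.sum_univ_three, -mul_eq_zero, -mul_self_eq_zero]
      all_goals try simp [Matrix.vecHead, Matrix.vecTail]
      all_goals try linear_combination hkey
      all_goals try linear_combination c 1 * hα
      all_goals try linear_combination h22
    have hdetM : M.det = 1 := by
      have h2 : c 1 * c 1 - c 2 * α = 1 := by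
        apply mul_right_cancel₀ hQXne
        linear_combination hkey - c 2 * hα
      simp [hM, Matrix.det_fin_three]
      linear_combination h2
    refine ⟨P * M * P⁻¹, ?_, ?_, ?_, ?_⟩
    · have key : Mᵀ * (Pᵀ * A * P) * M = Pᵀ * A * P := by
        rw [hG]; exact hG2
      have hPt : P⁻¹ᵀ * Pᵀ = 1 := by
        rw [← Matrix.transpose_mul, hPP, Matrix.transpose_one]
      have step1 : (P * M * P⁻¹)ᵀ * A * (P * M * P⁻¹) =
          P⁻¹ᵀ * (Mᵀ * (Pᵀ * A * P) * M) * P⁻¹ := by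
        simp only [Matrix.transpose_mul, Matrix.mul_assoc]
      rw [step1, key]
      have step2 : P⁻¹ᵀ * (Pᵀ * A * P) * P⁻¹ = (P⁻¹ᵀ * Pᵀ) * A * (P * P⁻¹) := by
        simp only [Matrix.mul_assoc]
      rw [step2, hPt, hPP, Matrix.one_mul, Matrix.mul_one]
    · rw [Matrix.det_mul, Matrix.det_mul, Matrix.det_nonsing_inv, hdetM,
        Ring.inverse_eq_inv]
      field_simp
    · have hu0 : P.mulVec ![1,0,0] = n := by
        funext i
        fin_cases i <;> simp [hP, Matrix.mulVec, dotProduct, Fin.sum_univ_three]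
      have hMu0 : M.mulVec ![(1:ℚ_[p]),0,0] = ![1,0,0] := by
        funext i
        fin_cases i <;> simp [hM, Matrix.mulVec, dotProduct, Fin.sum_univ_three]
      have h1 : P⁻¹.mulVec n = ![1,0,0] := by
        rw [← hu0, Matrix.mulVec_mulVec, hPiP, Matrix.one_mulVec]
      rw [← Matrix.mulVec_mulVec, h1, ← Matrix.mulVec_mulVec, hMu0, hu0]
    · have hu1 : P.mulVec ![0,1,0] = x := by
        funext i
        fin_cases i <;> simp [hP, Matrix.mulVec, dotProduct, Fin.sum_univ_three]
      have hMu1 : M.mulVec ![(0:ℚ_[p]),1,0] = ![0, c 1, c 2] := by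
        funext i
        fin_cases i <;> simp [hM, Matrix.mulVec, dotProduct, Fin.sum_univ_three]
      have hcv : ![(0:ℚ_[p]), c 1, c 2] = c := by
        funext i
        fin_cases i <;> simp [hc0.symm]
      have h1 : P⁻¹.mulVec x = ![0,1,0] := by
        rw [← hu1, Matrix.mulVec_mulVec, hPiP, Matrix.one_mulVec]
      rw [← Matrix.mulVec_mulVec, h1, ← Matrix.mulVec_mulVec, hMu1, hcv, hyc]
end

section
/- Let p be an odd prime, let u ∈ ℚ_p be a p-adic unit that is not a square in ℚ_p, and set v = −u if p ≡ 1 (mod 4) and v = −1 if p ≡ 3 (mod 4). Then every quadratic form Q on ℚ_p² that is anisotropic (Q(x) = 0 implies x = 0) is, after multiplication by a suitable nonzero scalar c ∈ ℚ_p, linearly equivalent (i.e., equal after an invertible linear change of variables) to exactly one of the three forms Q₁(x,y) = x² − v y², Q₂(x,y) = x² + p y², Q₃(x,y) = u x² + p y². In particular, no two of these three forms are linearly equivalent up to a nonzero scalar multiple. -/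
variable {p : ℕ} [Fact p.Prime]

lemma residue_ne_zero (x : ℤ_[p]) (hx : ‖x‖ = 1) : PadicInt.toZMod x ≠ 0 := by
  intro h
  have hk : x ∈ RingHom.ker (PadicInt.toZMod (p := p)) := h
  rw [PadicInt.ker_toZMod, PadicInt.maximalIdeal_eq_span_p, Ideal.mem_span_singleton,
    ← PadicInt.norm_lt_one_iff_dvd] at hk
  rw [hx] at hk; exact lt_irrefl 1 hk

lemma norm_one_of_toZMod_ne_zero (x : ℤ_[p]) (hx : PadicInt.toZMod x ≠ 0) : ‖x‖ = 1 := by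
  rcases lt_or_eq_of_le x.norm_le_one with h | h
  · exfalso
    apply hx
    have : x ∈ RingHom.ker (PadicInt.toZMod (p := p)) := by
      rw [PadicInt.ker_toZMod, PadicInt.maximalIdeal_eq_span_p, Ideal.mem_span_singleton,
        ← PadicInt.norm_lt_one_iff_dvd]
      exact h
    exact this
  · exact h

lemma two_norm_one (hp : p ≠ 2) : ‖(2 : ℤ_[p])‖ = 1 := by
  rcases lt_or_eq_of_le (2 : ℤ_[p]).norm_le_one with h | h
  · exfalso
    rw [show (2 : ℤ_[p]) = ((2:ℤ) : ℤ_[p]) by norm_num, PadicInt.norm_int_lt_one_iff_dvd] at h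
    have := (Fact.out : p.Prime).two_le
    have h2 : p ∣ 2 := Int.natCast_dvd_natCast.mp (by exact_mod_cast h)
    have := Nat.le_of_dvd (by norm_num) h2
    omega
  · exact h

lemma isSquare_of_residue (hp : p ≠ 2) (x : ℤ_[p]) (hx : ‖x‖ = 1)
    (h : IsSquare (PadicInt.toZMod x)) : IsSquare x := by
  obtain ⟨y, hy⟩ := h
  have hy0 : y ≠ 0 := by
    rintro rfl; exact residue_ne_zero x hx (by rw [hy, mul_zero])
  set b : ℤ_[p] := ((y.val : ℕ) : ℤ_[p]) with hbdef
  have hb : PadicInt.toZMod b = y := by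
    rw [hbdef, map_natCast]
    exact ZMod.natCast_rightInverse y
  have hbnorm : ‖b‖ = 1 := norm_one_of_toZMod_ne_zero _ (by rw [hb]; exact hy0)
  set F : Polynomial ℤ_[p] := Polynomial.X ^ 2 - Polynomial.C x with hF
  have hev : ∀ w : ℤ_[p], F.eval w = w ^ 2 - x := by intro w; simp [hF]
  have hder : F.derivative.eval b = 2 * b := by
    simp [hF, Polynomial.derivative_sub, Polynomial.derivative_X_pow]
    norm_num
  have hkey : ‖F.eval b‖ < ‖F.derivative.eval b‖ ^ 2 := by
    rw [hev, hder, norm_mul, two_norm_one hp, hbnorm, mul_one, one_pow]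
    have : b ^ 2 - x ∈ RingHom.ker (PadicInt.toZMod (p := p)) := by
      rw [RingHom.mem_ker, map_sub, map_pow, hb, hy, sq]
      ring
    rw [PadicInt.ker_toZMod, PadicInt.maximalIdeal_eq_span_p, Ideal.mem_span_singleton,
      ← PadicInt.norm_lt_one_iff_dvd] at this
    exact this
  obtain ⟨z, hz, -⟩ := hensels_lemma hkey
  rw [Polynomial.coe_aeval_eq_eval, hev] at hz
  exact ⟨z, by rw [← sub_eq_zero]; rw [sub_eq_zero] at hz ⊢; rw [← hz]; ring⟩


lemma norm_one_of_sq {t : ℚ_[p]} (h : ‖t * t‖ = 1) : ‖t‖ = 1 := by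
  rw [norm_mul] at h
  nlinarith [norm_nonneg t]

lemma unit_isSquare_iff (hp : p ≠ 2) (w : ℚ_[p]) (hw : ‖w‖ = 1) :
    IsSquare w ↔ IsSquare (PadicInt.toZMod (⟨w, hw.le⟩ : ℤ_[p])) := by
  constructor
  · rintro ⟨t, rfl⟩
    have ht : ‖t‖ = 1 := norm_one_of_sq hw
    refine ⟨PadicInt.toZMod (⟨t, ht.le⟩ : ℤ_[p]), ?_⟩
    exact map_mul (PadicInt.toZMod (p := p)) (show ℤ_[p] from ⟨t, ht.le⟩) (show ℤ_[p] from ⟨t, ht.le⟩)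
  · intro h
    obtain ⟨z, hz⟩ := isSquare_of_residue hp ⟨w, hw.le⟩ (by exact hw) h
    refine ⟨(z : ℚ_[p]), ?_⟩
    have := congrArg (fun x : ℤ_[p] => (x : ℚ_[p])) hz
    simpa using this

lemma nonsq_mul_nonsq (hp : p ≠ 2) {a b : ZMod p} (ha : a ≠ 0) (hb : b ≠ 0)
    (ha' : ¬ IsSquare a) (hb' : ¬ IsSquare b) : IsSquare (a * b) := by
  have hchar : ringChar (ZMod p) ≠ 2 := by
    rw [ZMod.ringChar_zmod_n]; exact hp
  have h1 : quadraticChar (ZMod p) a = -1 := quadraticChar_neg_one_iff_not_isSquare.mpr ha'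
  have h2 : quadraticChar (ZMod p) b = -1 := quadraticChar_neg_one_iff_not_isSquare.mpr hb'
  have hab : a * b ≠ 0 := mul_ne_zero ha hb
  have : quadraticChar (ZMod p) (a * b) = 1 := by
    rw [map_mul, h1, h2]; ring
  exact (quadraticChar_one_iff_isSquare hab).mp this

lemma units_mul_isSquare (hp : p ≠ 2) {w w' : ℚ_[p]} (hw : ‖w‖ = 1) (hw' : ‖w'‖ = 1)
    (h1 : ¬ IsSquare w) (h2 : ¬ IsSquare w') : IsSquare (w * w') := by
  have hww' : ‖w * w'‖ = 1 := by rw [norm_mul, hw, hw', mul_one]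
  rw [unit_isSquare_iff hp w hw] at h1
  rw [unit_isSquare_iff hp w' hw'] at h2
  rw [unit_isSquare_iff hp _ hww']
  set A : ℤ_[p] := ⟨w, hw.le⟩ with hA
  set B : ℤ_[p] := ⟨w', hw'.le⟩ with hB
  have : (⟨w * w', hww'.le⟩ : ℤ_[p]) = A * B := Subtype.ext rfl
  rw [this, map_mul]
  exact nonsq_mul_nonsq hp
    (residue_ne_zero _ (by rw [PadicInt.norm_def]; exact hw))
    (residue_ne_zero _ (by rw [PadicInt.norm_def]; exact hw')) h1 h2

lemma isSquare_neg_one_of (hp : p ≠ 2) (h4 : p % 4 = 1) : IsSquare (-1 : ℚ_[p]) := by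
  have hn : ‖(-1 : ℚ_[p])‖ = 1 := by rw [norm_neg, norm_one]
  rw [unit_isSquare_iff hp _ hn]
  have : PadicInt.toZMod (⟨(-1 : ℚ_[p]), hn.le⟩ : ℤ_[p]) = -1 := by
    have : (⟨(-1 : ℚ_[p]), hn.le⟩ : ℤ_[p]) = (-1 : ℤ_[p]) := rfl
    rw [this, map_neg, map_one]
  rw [this]
  exact ZMod.exists_sq_eq_neg_one_iff.mpr (by omega)

lemma not_isSquare_neg_one_of (hp : p ≠ 2) (h4 : p % 4 = 3) : ¬ IsSquare (-1 : ℚ_[p]) := by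
  have hn : ‖(-1 : ℚ_[p])‖ = 1 := by rw [norm_neg, norm_one]
  rw [unit_isSquare_iff hp _ hn]
  have heq : PadicInt.toZMod (⟨(-1 : ℚ_[p]), hn.le⟩ : ℤ_[p]) = -1 := by
    have : (⟨(-1 : ℚ_[p]), hn.le⟩ : ℤ_[p]) = (-1 : ℤ_[p]) := rfl
    rw [this, map_neg, map_one]
  rw [heq]
  intro hc
  exact (ZMod.exists_sq_eq_neg_one_iff.mp hc) h4

lemma not_isSquare_p_mul (w : ℚ_[p]) (hw : ‖w‖ = 1) : ¬ IsSquare ((p : ℚ_[p]) * w) := by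
  rintro ⟨t, ht⟩
  have hppos : (1 : ℝ) < (p : ℝ) := by exact_mod_cast (Fact.out : p.Prime).one_lt
  have hp0 : (p : ℚ_[p]) ≠ 0 := by
    exact_mod_cast (Nat.cast_ne_zero (R := ℚ_[p])).mpr (Fact.out : p.Prime).ne_zero
  have hw0 : w ≠ 0 := by intro h; rw [h, norm_zero] at hw; norm_num at hw
  have ht0 : t ≠ 0 := by
    rintro rfl; rw [mul_zero] at ht; exact (mul_ne_zero hp0 hw0) ht
  have hnorm : ‖(p : ℚ_[p]) * w‖ = (p : ℝ) ^ (-1 : ℤ) := by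
    rw [norm_mul, Padic.norm_p, hw, mul_one, zpow_neg_one]
  rw [ht, norm_mul, Padic.norm_eq_zpow_neg_valuation ht0, ← zpow_add₀ (by linarith : (p:ℝ) ≠ 0)] at hnorm
  have := zpow_right_injective₀ (by linarith : (0:ℝ) < p) (by linarith : (p:ℝ) ≠ 1) hnorm
  omega

lemma unit_part_decomp (a : ℚ_[p]) (ha : a ≠ 0) :
    ∃ (n : ℤ) (w : ℚ_[p]), ‖w‖ = 1 ∧ a = (p : ℚ_[p]) ^ n * w := by
  have hp0 : (p : ℚ_[p]) ≠ 0 := by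
    exact_mod_cast (Nat.cast_ne_zero (R := ℚ_[p])).mpr (Fact.out : p.Prime).ne_zero
  refine ⟨a.valuation, (p : ℚ_[p]) ^ (-a.valuation) * a, ?_, ?_⟩
  · rw [norm_mul, Padic.norm_p_zpow, Padic.norm_eq_zpow_neg_valuation ha, neg_neg,
      ← zpow_add₀ (by exact_mod_cast (Nat.cast_ne_zero (R := ℝ)).mpr (Fact.out : p.Prime).ne_zero : ((p:ℝ) ≠ 0))]
    simp
  · rw [← mul_assoc, ← zpow_add₀ hp0]
    simp

lemma four_classes (hp : p ≠ 2) (u : ℚ_[p]) (hu : ‖u‖ = 1) (husq : ¬ IsSquare u)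
    (a : ℚ_[p]) (ha : a ≠ 0) :
    (∃ s, a = s ^ 2) ∨ (∃ s, a = s ^ 2 * u) ∨ (∃ s, a = s ^ 2 * p) ∨
      (∃ s, a = s ^ 2 * ((p : ℚ_[p]) * u)) := by
  have hu0 : u ≠ 0 := by intro h; rw [h, norm_zero] at hu; norm_num at hu
  obtain ⟨n, w, hwn, hwa⟩ := unit_part_decomp a ha
  have hunit : (∃ t, w = t ^ 2) ∨ (∃ t, w = t ^ 2 * u) := by
    by_cases hsq : IsSquare w
    · obtain ⟨t, ht⟩ := hsq; exact Or.inl ⟨t, by rw [ht, sq]⟩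
    · obtain ⟨t, ht⟩ := units_mul_isSquare hp hwn hu hsq husq
      refine Or.inr ⟨t * u⁻¹, ?_⟩
      have : w * u = t ^ 2 := by rw [ht, sq]
      field_simp
      rw [← this]
  have hp0 : (p : ℚ_[p]) ≠ 0 := by
    exact_mod_cast (Nat.cast_ne_zero (R := ℚ_[p])).mpr (Fact.out : p.Prime).ne_zero
  have hsq2 : ∀ m : ℤ, ((p : ℚ_[p]) ^ m) ^ 2 = (p : ℚ_[p]) ^ (2 * m) := by
    intro m; rw [← zpow_natCast ((p : ℚ_[p]) ^ m) 2, ← zpow_mul, mul_comm]; norm_num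
  obtain ⟨m, hm | hm⟩ := Int.even_or_odd' n
  · -- n = 2m
    have hpow : (p : ℚ_[p]) ^ n = ((p : ℚ_[p]) ^ m) ^ 2 := by
      rw [hm, hsq2]
    rcases hunit with ⟨t, ht⟩ | ⟨t, ht⟩
    · exact Or.inl ⟨(p:ℚ_[p]) ^ m * t, by rw [hwa, ht, hpow]; ring⟩
    · exact Or.inr (Or.inl ⟨(p:ℚ_[p]) ^ m * t, by rw [hwa, ht, hpow]; ring⟩)
  · -- n = 2m + 1
    have hpow : (p : ℚ_[p]) ^ n = ((p : ℚ_[p]) ^ m) ^ 2 * p := by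
      rw [hm, zpow_add_one₀ hp0, hsq2]
    rcases hunit with ⟨t, ht⟩ | ⟨t, ht⟩
    · exact Or.inr (Or.inr (Or.inl ⟨(p:ℚ_[p]) ^ m * t, by rw [hwa, ht, hpow]; ring⟩))
    · exact Or.inr (Or.inr (Or.inr ⟨(p:ℚ_[p]) ^ m * t, by rw [hwa, ht, hpow]; ring⟩))

lemma d_cases (hp : p ≠ 2) (u : ℚ_[p]) (hu : ‖u‖ = 1) (husq : ¬ IsSquare u)
    (v : ℚ_[p]) (hv1 : p % 4 = 1 → v = -u) (hv3 : p % 4 = 3 → v = -1)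
    (d : ℚ_[p]) (hd : d ≠ 0) (hnd : ¬ IsSquare (-d)) :
    (∃ s, s ≠ 0 ∧ d = s ^ 2 * (-v)) ∨ (∃ s, s ≠ 0 ∧ d = s ^ 2 * p) ∨
      (∃ s, s ≠ 0 ∧ d = s ^ 2 * ((p : ℚ_[p]) * u)) := by
  have hu0 : u ≠ 0 := by intro h; rw [h, norm_zero] at hu; norm_num at hu
  have hodd : p % 4 = 1 ∨ p % 4 = 3 := by
    have h2 := (Fact.out : p.Prime).two_le
    have : p % 2 = 1 := (Nat.Prime.mod_two_eq_one_iff_ne_two (p := p) Fact.out).mpr hp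
    omega
  have hsne : ∀ s W : ℚ_[p], d = s ^ 2 * W → s ≠ 0 := by
    rintro s W h rfl; rw [zero_pow (by norm_num), zero_mul] at h; exact hd h
  rcases four_classes hp u hu husq d hd with ⟨s, hs⟩ | ⟨s, hs⟩ | ⟨s, hs⟩ | ⟨s, hs⟩
  · -- d = s^2 : only possible when -1 is not a square, i.e. p % 4 = 3, and then -v = 1
    rcases hodd with h4 | h4
    · exfalso
      obtain ⟨i, hi⟩ := isSquare_neg_one_of hp h4
      exact hnd ⟨i * s, by linear_combination (-1 : ℚ_[p]) * hs + s ^ 2 * hi⟩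
    · refine Or.inl ⟨s, hsne s 1 (by rw [hs, mul_one]), ?_⟩
      rw [hv3 h4, hs]; ring
  · -- d = s^2 * u
    rcases hodd with h4 | h4
    · refine Or.inl ⟨s, hsne s u hs, ?_⟩
      rw [hv1 h4, hs]; ring
    · exfalso
      have hmu : IsSquare (-u) := by
        have := units_mul_isSquare hp (by rw [norm_neg, norm_one] : ‖(-1 : ℚ_[p])‖ = 1) hu
          (not_isSquare_neg_one_of hp h4) husq
        simpa using this
      obtain ⟨j, hj⟩ := hmu
      exact hnd ⟨j * s, by linear_combination (-1 : ℚ_[p]) * hs + s ^ 2 * hj⟩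
  · exact Or.inr (Or.inl ⟨s, hsne s p hs, hs⟩)
  · exact Or.inr (Or.inr ⟨s, hsne s _ hs, hs⟩)

noncomputable def shearScale (t s : ℚ_[p]) (hs : s ≠ 0) : (Fin 2 → ℚ_[p]) ≃ₗ[ℚ_[p]] (Fin 2 → ℚ_[p]) where
  toFun x := ![x 0 + t * x 1, s * x 1]
  invFun x := ![x 0 - t * (s⁻¹ * x 1), s⁻¹ * x 1]
  map_add' x y := by
    funext i
    fin_cases i <;> simp <;> ring
  map_smul' c x := by
    funext i
    fin_cases i <;> simp <;> ring
  left_inv x := by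
    funext i
    fin_cases i <;> simp <;> field_simp <;> ring
  right_inv x := by
    funext i
    fin_cases i <;> simp <;> field_simp

@[simp] lemma shearScale_apply (t s : ℚ_[p]) (hs : s ≠ 0) (x : Fin 2 → ℚ_[p]) :
    shearScale t s hs x = ![x 0 + t * x 1, s * x 1] := rfl

open QuadraticMap in
lemma quad_expand (Q : QuadraticForm ℚ_[p] (Fin 2 → ℚ_[p])) (α β : ℚ_[p])
    (X Y : Fin 2 → ℚ_[p]) :
    Q (α • X + β • Y) = α ^ 2 * Q X + β ^ 2 * Q Y + α * β * polar Q X Y := by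
  rw [show Q (α • X + β • Y) = Q (α • X) + Q (β • Y) + polar Q (α • X) (β • Y) by
    rw [polar]; ring]
  rw [QuadraticMap.map_smul, QuadraticMap.map_smul, polar_smul_left, polar_smul_right]
  simp [smul_eq_mul]
  ring

open QuadraticMap in
lemma diagonalize (Q : QuadraticForm ℚ_[p] (Fin 2 → ℚ_[p])) (hQ : ∀ x, Q x = 0 → x = 0) :
    ∃ a b t : ℚ_[p], a ≠ 0 ∧ b ≠ 0 ∧
      ∀ x : Fin 2 → ℚ_[p], Q x = a * (x 0 + t * x 1) ^ 2 + b * (x 1) ^ 2 := by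
  set a := Q ![1, 0] with ha_def
  have ha : a ≠ 0 := by
    intro h
    have h0 := congrFun (hQ ![1, 0] h) 0
    simp at h0
  set r := polar Q ![1, 0] ![0, 1] with hr_def
  set t := r / (2 * a) with ht_def
  set f1 : Fin 2 → ℚ_[p] := ![-t, 1] with hf1_def
  set b := Q f1 with hb_def
  have hb : b ≠ 0 := by
    intro h
    have h1 := congrFun (hQ f1 h) 1
    simp [hf1_def] at h1
  have h2a : (2 : ℚ_[p]) * a ≠ 0 := by
    exact mul_ne_zero two_ne_zero ha
  have hf1e : f1 = (1 : ℚ_[p]) • ![0, 1] + (-t) • ![1, 0] := by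
    funext i; fin_cases i <;> simp [hf1_def]
  have hpolar0 : polar Q ![1, 0] f1 = 0 := by
    rw [hf1e, polar_add_right, polar_smul_right, polar_smul_right, polar_self]
    simp [smul_eq_mul, ← hr_def, ← ha_def]
    rw [ht_def]
    field_simp
    ring
  refine ⟨a, b, t, ha, hb, fun x => ?_⟩
  have hx : x = (x 0 + t * x 1) • ![1, 0] + (x 1) • f1 := by
    funext i; fin_cases i <;> simp [hf1_def] <;> ring
  calc Q x = Q ((x 0 + t * x 1) • ![1, 0] + (x 1) • f1) := by rw [← hx]
    _ = (x 0 + t * x 1) ^ 2 * Q ![1,0] + (x 1) ^ 2 * Q f1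
          + (x 0 + t * x 1) * (x 1) * polar Q ![1,0] f1 := quad_expand Q _ _ _ _
    _ = a * (x 0 + t * x 1) ^ 2 + b * (x 1) ^ 2 := by
          rw [hpolar0, ← ha_def, ← hb_def]; ring

lemma disc_invariant (Q : QuadraticForm ℚ_[p] (Fin 2 → ℚ_[p]))
    {c c' A B A' B' : ℚ_[p]} (hc : c ≠ 0)
    (S S' : (Fin 2 → ℚ_[p]) ≃ₗ[ℚ_[p]] (Fin 2 → ℚ_[p]))
    (h1 : ∀ x, c * Q x = A * (S x 0) ^ 2 + B * (S x 1) ^ 2)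
    (h2 : ∀ x, c' * Q x = A' * (S' x 0) ^ 2 + B' * (S' x 1) ^ 2) :
    ∃ m : ℚ_[p], A' * B' = m ^ 2 * (A * B) := by
  have key : ∀ y : Fin 2 → ℚ_[p],
      c * (A' * (y 0) ^ 2 + B' * (y 1) ^ 2) =
        c' * (A * (S (S'.symm y) 0) ^ 2 + B * (S (S'.symm y) 1) ^ 2) := by
    intro y
    have e1 := h1 (S'.symm y)
    have e2 := h2 (S'.symm y)
    rw [S'.apply_symm_apply] at e2
    calc c * (A' * (y 0) ^ 2 + B' * (y 1) ^ 2) = c * (c' * Q (S'.symm y)) := by rw [← e2]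
      _ = c' * (c * Q (S'.symm y)) := by ring
      _ = _ := by rw [e1]
  set w0 : Fin 2 → ℚ_[p] := S (S'.symm ![1, 0]) with hw0
  set w1 : Fin 2 → ℚ_[p] := S (S'.symm ![0, 1]) with hw1
  have hlin : ∀ y : Fin 2 → ℚ_[p], S (S'.symm y) = y 0 • w0 + y 1 • w1 := by
    intro y
    have hy : y = y 0 • ![1, 0] + y 1 • ![0, 1] := by
      funext i; fin_cases i <;> simp
    conv_lhs => rw [hy]
    rw [map_add, map_smul, map_smul, map_add, map_smul, map_smul]
  have key' : ∀ y : Fin 2 → ℚ_[p],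
      c * (A' * (y 0) ^ 2 + B' * (y 1) ^ 2) =
        c' * (A * (y 0 * w0 0 + y 1 * w1 0) ^ 2 + B * (y 0 * w0 1 + y 1 * w1 1) ^ 2) := by
    intro y
    rw [key y, hlin y]
    simp [smul_eq_mul]
  have E0 := key' ![1, 0]
  have E1 := key' ![0, 1]
  have E2 := key' ![1, 1]
  simp at E0 E1 E2
  have hcross2 : (2 : ℚ_[p]) * (c' * (A * (w0 0 * w1 0) + B * (w0 1 * w1 1))) = 0 := by
    linear_combination E0 + E1 - E2
  have hcross : c' * (A * (w0 0 * w1 0) + B * (w0 1 * w1 1)) = 0 := by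
    have h20 : (2 : ℚ_[p]) ≠ 0 := two_ne_zero
    exact (mul_eq_zero.mp hcross2).resolve_left h20
  refine ⟨c⁻¹ * c' * (w0 0 * w1 1 - w1 0 * w0 1), ?_⟩
  have suff : c ^ 2 * (A' * B') =
      c' ^ 2 * (w0 0 * w1 1 - w1 0 * w0 1) ^ 2 * (A * B) := by
    linear_combination (c * B') * E0 + (c' * (A * (w0 0) ^ 2 + B * (w0 1) ^ 2)) * E1 +
      (c' * (A * (w0 0 * w1 0) + B * (w0 1 * w1 1))) * hcross
  have hinv : A' * B' = c⁻¹ ^ 2 * (c ^ 2 * (A' * B')) := by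
    field_simp
  rw [hinv, suff]
  ring

theorem anisotropic_binary_forms_classification'
    (hp : p ≠ 2)
    (u : ℚ_[p]) (hu : ‖u‖ = 1) (husq : ¬ IsSquare u)
    (v : ℚ_[p])
    (hv1 : p % 4 = 1 → v = -u) (hv3 : p % 4 = 3 → v = -1)
    (Q : QuadraticForm ℚ_[p] (Fin 2 → ℚ_[p]))
    (hQ : ∀ x, Q x = 0 → x = 0) :
    ∃! i : Fin 3,
      ∃ c : ℚ_[p], c ≠ 0 ∧
        ∃ S : (Fin 2 → ℚ_[p]) ≃ₗ[ℚ_[p]] (Fin 2 → ℚ_[p]),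
          ∀ x : Fin 2 → ℚ_[p],
            c * Q x =
              ![fun y : Fin 2 → ℚ_[p] => y 0 ^ 2 - v * y 1 ^ 2,
                fun y : Fin 2 → ℚ_[p] => y 0 ^ 2 + (p : ℚ_[p]) * y 1 ^ 2,
                fun y : Fin 2 → ℚ_[p] => u * y 0 ^ 2 + (p : ℚ_[p]) * y 1 ^ 2] i (S x) := by
  have hp0 : (p : ℚ_[p]) ≠ 0 := by
    exact_mod_cast (Nat.cast_ne_zero (R := ℚ_[p])).mpr (Fact.out : p.Prime).ne_zero
  have hodd : p % 4 = 1 ∨ p % 4 = 3 := by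
    have h2 := (Fact.out : p.Prime).two_le
    have : p % 2 = 1 := (Nat.Prime.mod_two_eq_one_iff_ne_two (p := p) Fact.out).mpr hp
    omega
  have hvnorm : ‖v‖ = 1 := by
    rcases hodd with h | h
    · rw [hv1 h, norm_neg, hu]
    · rw [hv3 h, norm_neg, norm_one]
  have hnegv : ‖-v‖ = 1 := by rw [norm_neg, hvnorm]
  have huv : ‖u * -v‖ = 1 := by rw [norm_mul, hu, hnegv, mul_one]
  have hu0 : u ≠ 0 := by intro h; rw [h, norm_zero] at hu; norm_num at hu
  have Feval : ∀ (i : Fin 3) (y : Fin 2 → ℚ_[p]),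
      ![fun y : Fin 2 → ℚ_[p] => y 0 ^ 2 - v * y 1 ^ 2,
        fun y : Fin 2 → ℚ_[p] => y 0 ^ 2 + (p : ℚ_[p]) * y 1 ^ 2,
        fun y : Fin 2 → ℚ_[p] => u * y 0 ^ 2 + (p : ℚ_[p]) * y 1 ^ 2] i y =
        ![(1 : ℚ_[p]), 1, u] i * y 0 ^ 2 + ![-v, (p : ℚ_[p]), (p : ℚ_[p])] i * y 1 ^ 2 := by
    intro i y
    fin_cases i <;> simp <;> ring
  -- diagonalize
  obtain ⟨a, b, t, ha, hb, hQform⟩ := diagonalize Q hQ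
  set d := b / a with hd_def
  have hd : d ≠ 0 := div_ne_zero hb ha
  have hba : b = a * d := by rw [hd_def]; field_simp
  have hnd : ¬ IsSquare (-d) := by
    rintro ⟨z, hz⟩
    have hxq : Q ![z - t, 1] = 0 := by
      rw [hQform ![z - t, 1]]
      simp only [Matrix.cons_val_zero, Matrix.cons_val_one, Matrix.head_cons]
      linear_combination (-a) * hz + hba
    have h1 := congrFun (hQ _ hxq) 1
    simp at h1
  -- uniqueness of index
  have huni : ∀ i j : Fin 3,
      (∃ c : ℚ_[p], c ≠ 0 ∧ ∃ S : (Fin 2 → ℚ_[p]) ≃ₗ[ℚ_[p]] (Fin 2 → ℚ_[p]),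
        ∀ x, c * Q x =
          ![fun y : Fin 2 → ℚ_[p] => y 0 ^ 2 - v * y 1 ^ 2,
            fun y : Fin 2 → ℚ_[p] => y 0 ^ 2 + (p : ℚ_[p]) * y 1 ^ 2,
            fun y : Fin 2 → ℚ_[p] => u * y 0 ^ 2 + (p : ℚ_[p]) * y 1 ^ 2] i (S x)) →
      (∃ c : ℚ_[p], c ≠ 0 ∧ ∃ S : (Fin 2 → ℚ_[p]) ≃ₗ[ℚ_[p]] (Fin 2 → ℚ_[p]),
        ∀ x, c * Q x =
          ![fun y : Fin 2 → ℚ_[p] => y 0 ^ 2 - v * y 1 ^ 2,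
            fun y : Fin 2 → ℚ_[p] => y 0 ^ 2 + (p : ℚ_[p]) * y 1 ^ 2,
            fun y : Fin 2 → ℚ_[p] => u * y 0 ^ 2 + (p : ℚ_[p]) * y 1 ^ 2] j (S x)) →
      j = i := by
    rintro i j ⟨c, hc, S, hS⟩ ⟨c', hc', S', hS'⟩
    have hS2 : ∀ x, c * Q x =
        ![(1 : ℚ_[p]), 1, u] i * (S x 0) ^ 2 + ![-v, (p : ℚ_[p]), (p : ℚ_[p])] i * (S x 1) ^ 2 :=
      fun x => by rw [hS x, Feval]
    have hS'2 : ∀ x, c' * Q x =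
        ![(1 : ℚ_[p]), 1, u] j * (S' x 0) ^ 2 + ![-v, (p : ℚ_[p]), (p : ℚ_[p])] j * (S' x 1) ^ 2 :=
      fun x => by rw [hS' x, Feval]
    obtain ⟨m, hm⟩ := disc_invariant Q hc S S' hS2 hS'2
    fin_cases i <;> fin_cases j <;> simp at hm ⊢
    · exact not_isSquare_p_mul (-v) hnegv ⟨m * v, by linear_combination (-v) * hm⟩
    · exact not_isSquare_p_mul (u * -v) huv ⟨m * v, by linear_combination (-v) * hm⟩
    · exact not_isSquare_p_mul (-v) hnegv ⟨m * p, by linear_combination (p : ℚ_[p]) * hm⟩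
    · rcases hm with hm | hm
      · exact husq ⟨m, by linear_combination hm⟩
      · exact hp0 (by exact_mod_cast hm)
    · exact not_isSquare_p_mul (u * -v) huv ⟨m * u * p, by linear_combination (u * (p : ℚ_[p])) * hm⟩
    · have h1 : (1 : ℚ_[p]) = m ^ 2 * u := by
        have := mul_right_cancel₀ hp0 (show (1 : ℚ_[p]) * p = (m ^ 2 * u) * p by linear_combination hm)
        exact this
      have hm0 : m ≠ 0 := by
        rintro rfl; rw [zero_pow (by norm_num), zero_mul] at h1; exact one_ne_zero h1
      refine husq ⟨m⁻¹, ?_⟩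
      field_simp
      linear_combination (-1 : ℚ_[p]) * h1
  -- existence
  have hex : ∃ i : Fin 3,
      ∃ c : ℚ_[p], c ≠ 0 ∧ ∃ S : (Fin 2 → ℚ_[p]) ≃ₗ[ℚ_[p]] (Fin 2 → ℚ_[p]),
        ∀ x, c * Q x =
          ![fun y : Fin 2 → ℚ_[p] => y 0 ^ 2 - v * y 1 ^ 2,
            fun y : Fin 2 → ℚ_[p] => y 0 ^ 2 + (p : ℚ_[p]) * y 1 ^ 2,
            fun y : Fin 2 → ℚ_[p] => u * y 0 ^ 2 + (p : ℚ_[p]) * y 1 ^ 2] i (S x) := by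
    rcases d_cases hp u hu husq v hv1 hv3 d hd hnd with ⟨s, hs, hsw⟩ | ⟨s, hs, hsw⟩ | ⟨s, hs, hsw⟩
    · refine ⟨0, a⁻¹, inv_ne_zero ha, shearScale t s hs, fun x => ?_⟩
      rw [hQform x]
      simp only [shearScale_apply, Matrix.cons_val_zero, Matrix.cons_val_one, Matrix.head_cons]
      have hb2 : b = a * (s ^ 2 * (-v)) := by rw [hba, hsw]
      rw [hb2]
      field_simp
      ring
    · refine ⟨1, a⁻¹, inv_ne_zero ha, shearScale t s hs, fun x => ?_⟩
      rw [hQform x]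
      simp only [shearScale_apply, Matrix.cons_val_zero, Matrix.cons_val_one, Matrix.head_cons]
      have hb2 : b = a * (s ^ 2 * p) := by rw [hba, hsw]
      rw [hb2]
      field_simp
    · refine ⟨2, u * a⁻¹, mul_ne_zero hu0 (inv_ne_zero ha), shearScale t (s * u) (mul_ne_zero hs hu0),
        fun x => ?_⟩
      rw [hQform x]
      simp only [shearScale_apply, Matrix.cons_val_zero, Matrix.cons_val_one, Matrix.head_cons,
        Matrix.cons_val_two, Matrix.tail_cons]
      have hb2 : b = a * (s ^ 2 * ((p : ℚ_[p]) * u)) := by rw [hba, hsw]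
      rw [hb2]
      field_simp
  obtain ⟨i, hi⟩ := hex
  exact ⟨i, hi, fun j hj => huni i j hi hj⟩


/-- For an odd prime `p`, with `u` a non-square p-adic unit and
`v = -u` if `p ≡ 1 (mod 4)`, `v = -1` if `p ≡ 3 (mod 4)`, every anisotropic
quadratic form on `ℚ_p²` is, after multiplication by a suitable nonzero scalar,
linearly equivalent to exactly one of `x² - v y²`, `x² + p y²`, `u x² + p y²`. -/
theorem anisotropic_binary_forms_classification
    (p : ℕ) [Fact p.Prime] (hp : p ≠ 2)
    (u : ℚ_[p]) (hu : ‖u‖ = 1) (husq : ¬ IsSquare u)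
    (v : ℚ_[p])
    (hv1 : p % 4 = 1 → v = -u) (hv3 : p % 4 = 3 → v = -1)
    (Q : QuadraticForm ℚ_[p] (Fin 2 → ℚ_[p]))
    (hQ : ∀ x, Q x = 0 → x = 0) :
    ∃! i : Fin 3,
      ∃ c : ℚ_[p], c ≠ 0 ∧
        ∃ S : (Fin 2 → ℚ_[p]) ≃ₗ[ℚ_[p]] (Fin 2 → ℚ_[p]),
          ∀ x : Fin 2 → ℚ_[p],
            c * Q x =
              ![fun y : Fin 2 → ℚ_[p] => y 0 ^ 2 - v * y 1 ^ 2,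
                fun y : Fin 2 → ℚ_[p] => y 0 ^ 2 + (p : ℚ_[p]) * y 1 ^ 2,
                fun y : Fin 2 → ℚ_[p] => u * y 0 ^ 2 + (p : ℚ_[p]) * y 1 ^ 2] i (S x) := by
  exact anisotropic_binary_forms_classification' hp u hu husq v hv1 hv3 Q hQ
end

section
/- Let p be a prime and α ∈ ℚ_p such that −α is not a square in ℚ_p, and let A = diag(1, α) be a 2×2 matrix over ℚ_p. For σ ∈ ℚ_p define R(σ) = (1/(1+ασ²)) · [[1−ασ², −2ασ], [2σ, 1−ασ²]]. Then: (i) 1 + ασ² ≠ 0 for every σ ∈ ℚ_p; (ii) for every σ ∈ ℚ_p, R(σ) satisfies R(σ)ᵀ A R(σ) = A and det R(σ) = 1, and the matrix −I also satisfies these conditions; (iii) every L ∈ M₂(ℚ_p) with LᵀAL = A and det L = 1 equals either −I or R(σ) for some σ ∈ ℚ_p; (iv) the parametrization is one-to-one: R(σ) = R(τ) implies σ = τ, and R(σ) ≠ −I for every σ ∈ ℚ_p. -/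
open Matrix

/-- Parametrization of `SO(2)_p^α` for `-α` not a square, by
`R(σ) = (1+ασ²)⁻¹ [[1-ασ², -2ασ],[2σ, 1-ασ²]]` together with `-I`:
(i) `1 + ασ² ≠ 0`; (ii) `R(σ)` and `-I` lie in `SO(2)_p^α`; (iii) every element
of `SO(2)_p^α` equals `-I` or some `R(σ)`; (iv) the parametrization is injective
and never equals `-I`. -/
theorem so2p_parametrization
    (p : ℕ) [Fact p.Prime]
    (α : ℚ_[p]) (hα : ¬ IsSquare (-α))
    (A : Matrix (Fin 2) (Fin 2) ℚ_[p]) (hA : A = Matrix.diagonal ![1, α])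
    (R : ℚ_[p] → Matrix (Fin 2) (Fin 2) ℚ_[p])
    (hR : ∀ σ, R σ = (1 + α * σ ^ 2)⁻¹ •
      Matrix.of ![![1 - α * σ ^ 2, -(2 * α * σ)], ![2 * σ, 1 - α * σ ^ 2]]) :
    (∀ σ : ℚ_[p], 1 + α * σ ^ 2 ≠ 0) ∧
    (∀ σ : ℚ_[p], (R σ)ᵀ * A * R σ = A ∧ (R σ).det = 1) ∧
    ((-1 : Matrix (Fin 2) (Fin 2) ℚ_[p])ᵀ * A * (-1) = A ∧
      (-1 : Matrix (Fin 2) (Fin 2) ℚ_[p]).det = 1) ∧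
    (∀ L : Matrix (Fin 2) (Fin 2) ℚ_[p], Lᵀ * A * L = A → L.det = 1 →
      L = -1 ∨ ∃ σ : ℚ_[p], L = R σ) ∧
    (∀ σ τ : ℚ_[p], R σ = R τ → σ = τ) ∧
    (∀ σ : ℚ_[p], R σ ≠ -1) := by
  have hα0 : α ≠ 0 := by
    rintro rfl
    exact hα ⟨0, by simp⟩
  have hden : ∀ σ : ℚ_[p], 1 + α * σ ^ 2 ≠ 0 := by
    intro σ h
    rcases eq_or_ne σ 0 with rfl | hσ
    · simp at h
    · refine hα ⟨σ⁻¹, ?_⟩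
      field_simp
      linear_combination -h
  refine ⟨hden, ?_, ?_, ?_, ?_, ?_⟩
  · intro σ
    have hd := hden σ
    constructor
    · ext i j
      fin_cases i <;> fin_cases j <;>
        simp [hR, hA, Matrix.mul_apply, Fin.sum_univ_two, Matrix.diagonal,
          Matrix.transpose_apply, Matrix.vecHead, Matrix.vecTail, Matrix.cons_val',
          Matrix.cons_val_zero, Matrix.cons_val_one, Matrix.head_cons] <;>
        field_simp <;> ring
    · rw [Matrix.det_fin_two]
      simp [hR]
      field_simp
      ring
  · constructor
    · ext i j
      fin_cases i <;> fin_cases j <;>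
        simp [hA, Matrix.mul_apply, Fin.sum_univ_two, Matrix.diagonal]
    · simp [Matrix.det_fin_two]
  · intro L hL hdet
    obtain ⟨a, b, c, d, rfl⟩ : ∃ a b c d, L = !![a, b; c, d] :=
      ⟨L 0 0, L 0 1, L 1 0, L 1 1, Matrix.eta_fin_two L⟩
    have h00 := congrFun (congrFun hL 0) 0
    have h01 := congrFun (congrFun hL 0) 1
    simp [hA, Matrix.mul_apply, Fin.sum_univ_two, Matrix.diagonal,
      Matrix.transpose_apply, Matrix.vecHead, Matrix.vecTail] at h00 h01
    rw [Matrix.det_fin_two_of] at hdet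
    have hda : d = a := by linear_combination a * hdet + c * h01 - d * h00
    have hbc : b = -(α * c) := by linear_combination -α * c * hdet + a * h01 - b * h00
    rw [hda, hbc] at *
    rcases eq_or_ne a (-1) with hA1 | hA1
    · left
      have hc0 : c = 0 := by
        have h2 : α * c ^ 2 = 0 := by rw [hA1] at h00; linear_combination h00
        rcases mul_eq_zero.mp h2 with h | h
        · exact absurd h hα0
        · exact pow_eq_zero_iff (n := 2) (by norm_num) |>.mp h
      subst hA1 hc0
      ext i j
      fin_cases i <;> fin_cases j <;> simp
    · right
      have hs : (1 : ℚ_[p]) + a ≠ 0 := fun h => hA1 (by linear_combination h)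
      refine ⟨c / (1 + a), ?_⟩
      have hdσ := hden (c / (1 + a))
      ext i j
      fin_cases i <;> fin_cases j <;>
        simp only [hR, Matrix.smul_apply, Matrix.of_apply, Matrix.cons_val', Matrix.cons_val_zero,
          Matrix.cons_val_one, Matrix.head_cons, Matrix.head_fin_const, Matrix.empty_val',
          Matrix.cons_val_fin_one, smul_eq_mul, Fin.mk_zero, Fin.mk_one, Fin.isValue] <;>
        rw [eq_inv_mul_iff_mul_eq₀ hdσ] <;> field_simp
      · linear_combination (1 + a) * h00
      · linear_combination (-c) * h00
      · linear_combination c * h00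
      · linear_combination (1 + a) * h00
  · intro σ τ h
    have h0 := congrFun (congrFun h 0) 0
    have h1 := congrFun (congrFun h 1) 0
    have hdσ := hden σ
    have hdτ := hden τ
    simp [hR] at h0 h1
    rw [inv_mul_eq_div, inv_mul_eq_div, div_eq_div_iff hdσ hdτ] at h0 h1
    have hσ2 : α * σ ^ 2 = α * τ ^ 2 := by linear_combination -h0 / 2
    have h2 : (σ - τ) * (1 + α * τ ^ 2) = 0 := by
      linear_combination h1 / 2 + τ * hσ2
    rcases mul_eq_zero.mp h2 with h3 | h3
    · exact sub_eq_zero.mp h3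
    · exact absurd h3 hdτ
  · intro σ h
    have h0 := congrFun (congrFun h 0) 0
    have hdσ := hden σ
    simp [hR] at h0
    rw [inv_mul_eq_div, div_eq_iff hdσ] at h0
    have : (2 : ℚ_[p]) = 0 := by linear_combination h0
    norm_num at this
end

section
/- Let p be an odd prime, v ∈ ℚ_p a p-adic unit that is not a square in ℚ_p, A = diag(1, -v, p), Q_+(x) = xᵀAx, B(x,y) = xᵀAy, and SO(3)_p = {L ∈ M₃(ℚ_p) : LᵀAL = A, det L = 1}. Let (g, h, n) be a basis of ℚ_p³ pairwise orthogonal with respect to B. Then Q_+(g) ≠ 0; set α = Q_+(h)/Q_+(g). For every L ∈ SO(3)_p with L n = n, exactly one of the following holds: either (L g = −g and L h = −h), or there exists a unique σ ∈ ℚ_p (with 1 + ασ² ≠ 0) such that L g = ((1−ασ²)/(1+ασ²))·g + (2σ/(1+ασ²))·h and L h = (−2ασ/(1+ασ²))·g + ((1−ασ²)/(1+ασ²))·h. Conversely, for every σ ∈ ℚ_p these formulas together with L n = n define an element of SO(3)_p, and the map sending g ↦ −g, h ↦ −h, n ↦ n also lies in SO(3)_p. -/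
open Matrix

lemma unit_sq_sub_norm (p : ℕ) [Fact p.Prime] (hp : p ≠ 2)
    (v : ℚ_[p]) (hv : ‖v‖ = 1) (hvsq : ¬ IsSquare v)
    (t : ℚ_[p]) (ht : ‖t‖ = 1) : ‖t ^ 2 - v‖ = 1 := by
  have hle : ‖t ^ 2 - v‖ ≤ 1 := by
    have h1 := Padic.nonarchimedean (t ^ 2) (-v)
    rw [← sub_eq_add_neg] at h1
    refine h1.trans ?_
    simp [norm_pow, ht, hv]
  rcases eq_or_lt_of_le hle with heq | hlt
  · exact heq
  exfalso
  have htle : ‖t‖ ≤ 1 := ht.le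
  set T : ℤ_[p] := ⟨t, htle⟩ with hT
  set V : ℤ_[p] := ⟨v, hv.le⟩ with hV
  set F : Polynomial ℤ_[p] := Polynomial.X ^ 2 - Polynomial.C V with hF
  have hevalT : F.eval T = T ^ 2 - V := by simp [hF]
  have hnormT : ‖F.eval T‖ = ‖t ^ 2 - v‖ := by
    rw [hevalT, PadicInt.norm_def]
    congr 1
  have hderiv : F.derivative = Polynomial.C 2 * Polynomial.X := by
    simp [hF, Polynomial.derivative_X_pow]
    norm_num
    exact (map_ofNat Polynomial.C 2).symm
  have h2 : ‖(2 : ℤ_[p])‖ = 1 := by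
    have hnd : ¬ ((p : ℤ) ∣ 2) := by
      intro hdvd
      have : (p : ℤ) ∣ ((2 : ℕ) : ℤ) := by exact_mod_cast hdvd
      rw [Int.natCast_dvd_natCast] at this
      exact hp ((Nat.prime_dvd_prime_iff_eq Fact.out Nat.prime_two).mp this)
    have hlt2 := (PadicInt.norm_int_lt_one_iff_dvd (p := p) 2).not.mpr hnd
    have hle2 : ‖((2 : ℤ) : ℤ_[p])‖ ≤ 1 := PadicInt.norm_le_one _
    have : ‖((2 : ℤ) : ℤ_[p])‖ = 1 := le_antisymm hle2 (not_lt.mp hlt2)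
    simpa using this
  have hnormD : ‖F.derivative.eval T‖ = 1 := by
    rw [hderiv]
    simp [norm_mul, h2, ht]
    rw [PadicInt.norm_def]; exact ht
  have hcond : ‖F.eval T‖ < ‖F.derivative.eval T‖ ^ 2 := by
    rw [hnormT, hnormD, one_pow]; exact hlt
  obtain ⟨z, hz, -⟩ := hensels_lemma hcond
  have hzv : z ^ 2 = V := by
    have h0 : z ^ 2 - V = 0 := by simpa [hF] using hz
    exact sub_eq_zero.mp h0
  have hcoe : ((z : ℚ_[p])) ^ 2 = v := by
    have := congrArg (fun w : ℤ_[p] => (w : ℚ_[p])) hzv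
    push_cast at this
    exact this
  exact hvsq ⟨(z : ℚ_[p]), by rw [← hcoe]; ring⟩

lemma padic_aniso (p : ℕ) [Fact p.Prime] (hp : p ≠ 2)
    (v : ℚ_[p]) (hv : ‖v‖ = 1) (hvsq : ¬ IsSquare v)
    (x y z : ℚ_[p]) (hxyz : x ^ 2 - v * y ^ 2 + p * z ^ 2 = 0) :
    x = 0 ∧ y = 0 ∧ z = 0 := by
  have hv0 : v ≠ 0 := by intro h0; rw [h0] at hv; simp at hv
  have bin : ∀ a b : ℚ_[p], a ^ 2 - v * b ^ 2 = 0 → a = 0 ∧ b = 0 := by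
    intro a b hab
    by_cases hb : b = 0
    · refine ⟨?_, hb⟩
      rw [hb] at hab
      simpa using hab
    · exfalso
      have hb2 : b ^ 2 ≠ 0 := pow_ne_zero 2 hb
      refine hvsq ⟨a / b, ?_⟩
      rw [div_mul_div_comm, ← pow_two, ← pow_two, eq_div_iff hb2]
      linear_combination -hab
  by_cases hz : z = 0
  · rw [hz] at hxyz
    obtain ⟨hx, hy⟩ := bin x y (by linear_combination hxyz)
    exact ⟨hx, hy, hz⟩
  exfalso
  have hpne : (p : ℚ_[p]) ≠ 0 := by
    exact_mod_cast Nat.cast_ne_zero.mpr (Fact.out : p.Prime).ne_zero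
  have hlhs : x ^ 2 - v * y ^ 2 = -((p : ℚ_[p]) * z ^ 2) := by linear_combination hxyz
  have hlhs0 : x ^ 2 - v * y ^ 2 ≠ 0 := by
    rw [hlhs]
    simp [hpne, hz]
  obtain ⟨c, hc0, hcn⟩ : ∃ c : ℚ_[p], c ≠ 0 ∧ ‖x ^ 2 - v * y ^ 2‖ = ‖c‖ ^ 2 := by
    by_cases hxyeq : ‖x‖ = ‖y‖
    · have hy0 : y ≠ 0 := by
        intro h0
        rw [h0] at hxyeq
        simp only [norm_zero] at hxyeq
        have hx0 : x = 0 := norm_eq_zero.mp hxyeq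
        rw [hx0, h0] at hlhs0
        simp at hlhs0
      refine ⟨y, hy0, ?_⟩
      have hfac : x ^ 2 - v * y ^ 2 = y ^ 2 * ((x / y) ^ 2 - v) := by
        field_simp
      have hu : ‖(x / y : ℚ_[p])‖ = 1 := by
        rw [norm_div, hxyeq, div_self (norm_ne_zero_iff.mpr hy0)]
      rw [hfac, norm_mul, norm_pow, unit_sq_sub_norm p hp v hv hvsq _ hu, mul_one]
    · have hne : ‖x ^ 2‖ ≠ ‖-(v * y ^ 2)‖ := by
        rw [norm_neg, norm_mul, norm_pow, norm_pow, hv, one_mul]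
        intro hcon
        exact hxyeq (by
          have hx := norm_nonneg x
          have hy := norm_nonneg y
          nlinarith)
      have hmax := Padic.add_eq_max_of_ne hne
      rw [← sub_eq_add_neg] at hmax
      rcases le_or_gt ‖x‖ ‖y‖ with hle | hlt
      · have hy0 : y ≠ 0 := by
          intro h0
          rw [h0] at hle
          simp only [norm_zero] at hle
          have : ‖x‖ = 0 := le_antisymm hle (norm_nonneg x)
          exact hxyeq (by rw [this, h0, norm_zero])
        refine ⟨y, hy0, ?_⟩
        rw [hmax, norm_neg, norm_mul, norm_pow, norm_pow, hv, one_mul]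
        rw [max_eq_right (by nlinarith [norm_nonneg x, norm_nonneg y])]
      · have hx0 : x ≠ 0 := by
          intro h0
          rw [h0] at hlt
          simp only [norm_zero] at hlt
          exact absurd hlt (not_lt.mpr (norm_nonneg y))
        refine ⟨x, hx0, ?_⟩
        rw [hmax, norm_neg, norm_mul, norm_pow, norm_pow, hv, one_mul]
        rw [max_eq_left (by nlinarith [norm_nonneg x, norm_nonneg y])]
  have h1 : ‖c‖ ^ 2 = ‖(p : ℚ_[p])‖ * ‖z‖ ^ 2 := by
    rw [← hcn, hlhs, norm_neg, norm_mul, norm_pow]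
  rw [Padic.norm_eq_zpow_neg_valuation hc0, Padic.norm_eq_zpow_neg_valuation hz, Padic.norm_p] at h1
  have hp1 : (1 : ℝ) < p := by exact_mod_cast (Fact.out : p.Prime).one_lt
  have hppos : (0 : ℝ) < p := lt_trans zero_lt_one hp1
  have h2 : (p : ℝ) ^ (-c.valuation * 2) = (p : ℝ) ^ (-1 + -z.valuation * 2) := by
    rw [_root_.zpow_mul, zpow_add₀ (ne_of_gt hppos), _root_.zpow_mul, _root_.zpow_neg_one]
    rw [zpow_two, zpow_two]
    rw [pow_two, pow_two] at h1
    exact h1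
  have h3 := zpow_right_injective₀ hppos hp1.ne' h2
  omega

set_option maxHeartbeats 1000000 in
/-- Parametrization of the rotations around a fixed axis `n`, with
respect to an orthogonal basis `(g, h, n)` and `α = Q₊(h)/Q₊(g)`: every
`L ∈ SO(3)_p` fixing `n` either sends `g ↦ -g, h ↦ -h`, or acts on `(g, h)` by
the matrix `R(σ)` for a unique `σ ∈ ℚ_p`, but not both; conversely every such
prescription defines an element of `SO(3)_p`. -/
theorem rotations_around_axis_parametrization
    (p : ℕ) [Fact p.Prime] (hp : p ≠ 2)
    (v : ℚ_[p]) (hv : ‖v‖ = 1) (hvsq : ¬ IsSquare v)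
    (A : Matrix (Fin 3) (Fin 3) ℚ_[p])
    (hA : A = Matrix.diagonal ![1, -v, (p : ℚ_[p])])
    (Q : (Fin 3 → ℚ_[p]) → ℚ_[p]) (hQ : ∀ z, Q z = z ⬝ᵥ A.mulVec z)
    (B : (Fin 3 → ℚ_[p]) → (Fin 3 → ℚ_[p]) → ℚ_[p])
    (hB : ∀ z w, B z w = z ⬝ᵥ A.mulVec w)
    (g h n : Fin 3 → ℚ_[p])
    (hbasis : LinearIndependent ℚ_[p] ![g, h, n])
    (hgh : B g h = 0) (hgn : B g n = 0) (hhn : B h n = 0)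
    (α : ℚ_[p]) (hα : α = Q h / Q g) :
    Q g ≠ 0 ∧
    (∀ L : Matrix (Fin 3) (Fin 3) ℚ_[p],
      Lᵀ * A * L = A → L.det = 1 → L.mulVec n = n →
      Xor' (L.mulVec g = -g ∧ L.mulVec h = -h)
        (∃! σ : ℚ_[p], 1 + α * σ ^ 2 ≠ 0 ∧
          L.mulVec g = ((1 - α * σ ^ 2) / (1 + α * σ ^ 2)) • g +
            (2 * σ / (1 + α * σ ^ 2)) • h ∧
          L.mulVec h = (-(2 * α * σ) / (1 + α * σ ^ 2)) • g +
            ((1 - α * σ ^ 2) / (1 + α * σ ^ 2)) • h)) ∧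
    (∀ σ : ℚ_[p], ∃ L : Matrix (Fin 3) (Fin 3) ℚ_[p],
      Lᵀ * A * L = A ∧ L.det = 1 ∧ L.mulVec n = n ∧
      L.mulVec g = ((1 - α * σ ^ 2) / (1 + α * σ ^ 2)) • g +
        (2 * σ / (1 + α * σ ^ 2)) • h ∧
      L.mulVec h = (-(2 * α * σ) / (1 + α * σ ^ 2)) • g +
        ((1 - α * σ ^ 2) / (1 + α * σ ^ 2)) • h) ∧
    (∃ L : Matrix (Fin 3) (Fin 3) ℚ_[p],
      Lᵀ * A * L = A ∧ L.det = 1 ∧ L.mulVec n = n ∧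
      L.mulVec g = -g ∧ L.mulVec h = -h) := by
  -- symmetry of A
  have hAsymm : Aᵀ = A := by rw [hA]; exact Matrix.diagonal_transpose _
  have hsym : ∀ z w : Fin 3 → ℚ_[p], z ⬝ᵥ A *ᵥ w = w ⬝ᵥ A *ᵥ z := by
    intro z w
    rw [Matrix.dotProduct_mulVec]
    conv_lhs => rw [← hAsymm, Matrix.vecMul_transpose]
    rw [dotProduct_comm]
  have dgh : g ⬝ᵥ A *ᵥ h = 0 := by rw [← hB]; exact hgh
  have dgn : g ⬝ᵥ A *ᵥ n = 0 := by rw [← hB]; exact hgn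
  have dhn : h ⬝ᵥ A *ᵥ n = 0 := by rw [← hB]; exact hhn
  have dhg : h ⬝ᵥ A *ᵥ g = 0 := by rw [hsym]; exact dgh
  have dng : n ⬝ᵥ A *ᵥ g = 0 := by rw [hsym]; exact dgn
  have dnh : n ⬝ᵥ A *ᵥ h = 0 := by rw [hsym]; exact dhn
  -- anisotropy
  have keyQ : ∀ z : Fin 3 → ℚ_[p], Q z = 0 → z = 0 := by
    intro z hz0
    rw [hQ, hA] at hz0
    have hform : z 0 ^ 2 - v * z 1 ^ 2 + (p : ℚ_[p]) * z 2 ^ 2 = 0 := by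
      simp [Matrix.mulVec_diagonal, dotProduct, Fin.sum_univ_three] at hz0
      linear_combination hz0
    obtain ⟨h0, h1, h2⟩ := padic_aniso p hp v hv hvsq _ _ _ hform
    funext i; fin_cases i <;> assumption
  -- linear independence consequences
  have uniq0 : ∀ c : Fin 3 → ℚ_[p], c 0 • g + c 1 • h + c 2 • n = 0 → c = 0 := by
    have hLI := hbasis
    rw [Fintype.linearIndependent_iff] at hLI
    intro c hc
    funext i
    exact hLI c (by simpa [Fin.sum_univ_three] using hc) i
  have uniq : ∀ a b c a' b' c' : ℚ_[p],
      a • g + b • h + c • n = a' • g + b' • h + c' • n →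
      a = a' ∧ b = b' ∧ c = c' := by
    intro a b c a' b' c' heq
    have hdiff : (a - a') • g + (b - b') • h + (c - c') • n = 0 := by
      have : (a - a') • g + (b - b') • h + (c - c') • n =
          (a • g + b • h + c • n) - (a' • g + b' • h + c' • n) := by module
      rw [this, heq, sub_self]
    have h0 := uniq0 ![a - a', b - b', c - c'] (by simpa using hdiff)
    refine ⟨?_, ?_, ?_⟩
    · have := congrFun h0 0; simp at this; linear_combination this
    · have := congrFun h0 1; simp at this; linear_combination this
    · have := congrFun h0 2; simp at this; linear_combination this
  have hQg : Q g ≠ 0 := by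
    intro h0
    exact hbasis.ne_zero 0 (by simpa using keyQ g h0)
  have hQh : Q h ≠ 0 := by
    intro h0
    exact hbasis.ne_zero 1 (by simpa using keyQ h h0)
  have hQn : Q n ≠ 0 := by
    intro h0
    exact hbasis.ne_zero 2 (by simpa using keyQ n h0)
  have hQhα : Q h = α * Q g := by rw [hα]; field_simp
  have hαne : α ≠ 0 := by rw [hα]; exact div_ne_zero hQh hQg
  -- bilinear expansion
  have hBexp : ∀ a b c a' b' c' : ℚ_[p],
      (a • g + b • h + c • n) ⬝ᵥ A *ᵥ (a' • g + b' • h + c' • n)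
        = a * a' * Q g + b * b' * Q h + c * c' * Q n := by
    intro a b c a' b' c'
    simp only [Matrix.mulVec_add, Matrix.mulVec_smul, dotProduct_add, add_dotProduct,
      dotProduct_smul, smul_dotProduct, smul_eq_mul]
    linear_combination a * b' * dgh + a * c' * dgn + b * a' * dhg + b * c' * dhn +
      c * a' * dng + c * b' * dnh - a * a' * hQ g - b * b' * hQ h - c * c' * hQ n
  -- nonvanishing of 1 + α σ²
  have hplus : ∀ σ : ℚ_[p], 1 + α * σ ^ 2 ≠ 0 := by
    intro σ hcon
    have hQ0 : Q (g + σ • h) = Q g * (1 + α * σ ^ 2) := by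
      rw [hQ]
      have hre : g + σ • h = (1 : ℚ_[p]) • g + σ • h + (0 : ℚ_[p]) • n := by module
      rw [hre, hBexp]
      linear_combination σ ^ 2 * hQhα
    have hne : g + σ • h ≠ 0 := by
      intro h0
      have hz := uniq0 ![1, σ, 0] (by
        simpa using (show (1 : ℚ_[p]) • g + σ • h + (0 : ℚ_[p]) • n = 0 by
          rw [one_smul, zero_smul, add_zero]; exact h0))
      simpa using congrFun hz 0
    exact hne (keyQ _ (by rw [hQ0, hcon, mul_zero]))
  -- matrix of the basis as columns
  set S : Matrix (Fin 3) (Fin 3) ℚ_[p] := (Matrix.of ![g, h, n])ᵀ with hS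
  have hSmul : ∀ c : Fin 3 → ℚ_[p], S *ᵥ c = c 0 • g + c 1 • h + c 2 • n := by
    intro c
    funext i
    simp [hS, Matrix.mulVec, dotProduct, Fin.sum_univ_three, Matrix.transpose_apply,
      Matrix.vecHead, Matrix.vecTail]
    ring
  have hdetS : IsUnit S.det := by
    rw [isUnit_iff_ne_zero]
    intro h0
    obtain ⟨c, hcne, hc0⟩ := (Matrix.exists_mulVec_eq_zero_iff).mpr h0
    exact hcne (uniq0 c (by rw [← hSmul]; exact hc0))
  have hdetSne : S.det ≠ 0 := hdetS.ne_zero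
  have hSg : S *ᵥ Pi.single 0 1 = g := by rw [hSmul]; simp [Pi.single_apply]
  have hSh : S *ᵥ Pi.single 1 1 = h := by rw [hSmul]; simp [Pi.single_apply]
  have hSn : S *ᵥ Pi.single 2 1 = n := by rw [hSmul]; simp [Pi.single_apply]
  have matext : ∀ X Y : Matrix (Fin 3) (Fin 3) ℚ_[p],
      (∀ j, X *ᵥ Pi.single j 1 = Y *ᵥ Pi.single j 1) → X = Y := by
    intro X Y hXY
    ext i j
    have := congrFun (hXY j) i
    simpa [Matrix.mulVec_single] using this
  -- scalar forms
  have dform : ∀ z w : Fin 3 → ℚ_[p], z ⬝ᵥ A *ᵥ w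
      = z 0 * w 0 - v * (z 1 * w 1) + (p : ℚ_[p]) * (z 2 * w 2) := by
    intro z w
    rw [hA]
    simp [Matrix.mulVec, dotProduct, Matrix.diagonal, Fin.sum_univ_three]
    ring
  have dghs : g 0 * h 0 - v * (g 1 * h 1) + (p : ℚ_[p]) * (g 2 * h 2) = 0 := by
    rw [← dform g h]; exact dgh
  have dgns : g 0 * n 0 - v * (g 1 * n 1) + (p : ℚ_[p]) * (g 2 * n 2) = 0 := by
    rw [← dform g n]; exact dgn
  have dhns : h 0 * n 0 - v * (h 1 * n 1) + (p : ℚ_[p]) * (h 2 * n 2) = 0 := by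
    rw [← dform h n]; exact dhn
  have qgs : Q g = g 0 * g 0 - v * (g 1 * g 1) + (p : ℚ_[p]) * (g 2 * g 2) :=
    (hQ g).trans (dform g g)
  have qhs : Q h = h 0 * h 0 - v * (h 1 * h 1) + (p : ℚ_[p]) * (h 2 * h 2) :=
    (hQ h).trans (dform h h)
  have qns : Q n = n 0 * n 0 - v * (n 1 * n 1) + (p : ℚ_[p]) * (n 2 * n 2) :=
    (hQ n).trans (dform n n)
  -- Gram matrix in the basis
  have hG : Sᵀ * A * S = Matrix.diagonal ![Q g, Q h, Q n] := by
    ext i j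
    fin_cases i <;> fin_cases j <;>
      simp [hS, hA, Matrix.mul_apply, Fin.sum_univ_three, Matrix.diagonal,
        Matrix.transpose_apply, Matrix.vecHead, Matrix.vecTail, Matrix.vecMul, dotProduct]
    · linear_combination -qgs
    · linear_combination dghs
    · linear_combination dgns
    · linear_combination dghs
    · linear_combination -qhs
    · linear_combination dhns
    · linear_combination dgns
    · linear_combination dhns
    · linear_combination -qns
  -- builder
  have build : ∀ a b d e : ℚ_[p],
      a ^ 2 + α * b ^ 2 = 1 → d ^ 2 + α * e ^ 2 = α →
      a * d + α * b * e = 0 → a * e - b * d = 1 →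
      ∃ L : Matrix (Fin 3) (Fin 3) ℚ_[p],
        Lᵀ * A * L = A ∧ L.det = 1 ∧ L *ᵥ n = n ∧
        L *ᵥ g = a • g + b • h ∧ L *ᵥ h = d • g + e • h := by
    intro a b d e h1 h2 h3 h4
    set M : Matrix (Fin 3) (Fin 3) ℚ_[p] :=
      Matrix.of ![![a, d, 0], ![b, e, 0], ![0, 0, 1]] with hM
    have keyDiag : Mᵀ * Matrix.diagonal ![Q g, Q h, Q n] * M
        = Matrix.diagonal ![Q g, Q h, Q n] := by
      ext i j
      fin_cases i <;> fin_cases j <;>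
        simp [hM, Matrix.mul_apply, Fin.sum_univ_three, Matrix.diagonal,
          Matrix.transpose_apply, Matrix.vecHead, Matrix.vecTail]
      · linear_combination Q g * h1 + b ^ 2 * hQhα
      · linear_combination Q g * h3 + b * e * hQhα
      · linear_combination Q g * h3 + b * e * hQhα
      · linear_combination Q g * h2 + (e ^ 2 - 1) * hQhα
    have hMn : M *ᵥ Pi.single 2 1 = Pi.single 2 1 := by
      funext i
      fin_cases i <;>
        simp [hM, Matrix.mulVec, dotProduct, Fin.sum_univ_three, Pi.single_apply,
          Matrix.vecHead, Matrix.vecTail]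
    have hMg : M *ᵥ Pi.single 0 1 = ![a, b, 0] := by
      funext i
      fin_cases i <;>
        simp [hM, Matrix.mulVec, dotProduct, Fin.sum_univ_three, Pi.single_apply,
          Matrix.vecHead, Matrix.vecTail]
    have hMh : M *ᵥ Pi.single 1 1 = ![d, e, 0] := by
      funext i
      fin_cases i <;>
        simp [hM, Matrix.mulVec, dotProduct, Fin.sum_univ_three, Pi.single_apply,
          Matrix.vecHead, Matrix.vecTail]
    refine ⟨S * M * S⁻¹, ?_, ?_, ?_, ?_, ?_⟩
    · -- orthogonality
      have hSTdet : IsUnit Sᵀ.det := by rwa [Matrix.det_transpose]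
      calc (S * M * S⁻¹)ᵀ * A * (S * M * S⁻¹)
          = (S⁻¹)ᵀ * (Mᵀ * (Sᵀ * A * S) * M) * S⁻¹ := by
            simp only [Matrix.transpose_mul, Matrix.mul_assoc]
        _ = (S⁻¹)ᵀ * (Sᵀ * A * S) * S⁻¹ := by rw [hG, keyDiag]
        _ = A := by
            rw [Matrix.transpose_nonsing_inv]
            calc (Sᵀ)⁻¹ * (Sᵀ * A * S) * S⁻¹
                = (Sᵀ)⁻¹ * Sᵀ * A * (S * S⁻¹) := by
                  simp only [Matrix.mul_assoc]
              _ = A := by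
                  rw [Matrix.nonsing_inv_mul _ hSTdet, Matrix.mul_nonsing_inv _ hdetS,
                    Matrix.one_mul, Matrix.mul_one]
    · -- determinant
      have hdM : M.det = 1 := by
        simp [hM, Matrix.det_fin_three, Matrix.vecHead, Matrix.vecTail]
        linear_combination h4
      rw [Matrix.det_mul, Matrix.det_mul, hdM, mul_one, Matrix.det_nonsing_inv,
        Ring.inverse_eq_inv', mul_inv_cancel₀ hdetSne]
    · -- fixes n
      rw [← hSn, Matrix.mulVec_mulVec, Matrix.mul_assoc,
        Matrix.nonsing_inv_mul _ hdetS, Matrix.mul_one, ← Matrix.mulVec_mulVec, hMn, hSn]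
    · -- image of g
      conv_lhs => rw [show g = S *ᵥ Pi.single 0 1 from hSg.symm]
      rw [Matrix.mulVec_mulVec, Matrix.mul_assoc,
        Matrix.nonsing_inv_mul _ hdetS, Matrix.mul_one, ← Matrix.mulVec_mulVec, hMg, hSmul]
      simp [Matrix.vecHead, Matrix.vecTail]
    · -- image of h
      conv_lhs => rw [show h = S *ᵥ Pi.single 1 1 from hSh.symm]
      rw [Matrix.mulVec_mulVec, Matrix.mul_assoc,
        Matrix.nonsing_inv_mul _ hdetS, Matrix.mul_one, ← Matrix.mulVec_mulVec, hMh, hSmul]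
      simp [Matrix.vecHead, Matrix.vecTail]
  refine ⟨hQg, ?_, ?_, ?_⟩
  · -- forward direction
    intro L hL hdetL hn
    have hBinv : ∀ z w : Fin 3 → ℚ_[p],
        (L *ᵥ z) ⬝ᵥ A *ᵥ (L *ᵥ w) = z ⬝ᵥ A *ᵥ w := by
      intro z w
      conv_rhs => rw [← hL, ← Matrix.mulVec_mulVec, ← Matrix.mulVec_mulVec,
        Matrix.dotProduct_mulVec, Matrix.vecMul_transpose]
    have hcoef : ∀ u : Fin 3 → ℚ_[p],
        ∃ c : Fin 3 → ℚ_[p], u = c 0 • g + c 1 • h + c 2 • n := by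
      intro u
      exact ⟨S⁻¹ *ᵥ u, by
        rw [← hSmul, Matrix.mulVec_mulVec, Matrix.mul_nonsing_inv _ hdetS,
          Matrix.one_mulVec]⟩
    obtain ⟨c, hc⟩ := hcoef (L *ᵥ g)
    obtain ⟨c', hc'⟩ := hcoef (L *ᵥ h)
    have en : ∀ x y z : ℚ_[p], (x • g + y • h + z • n) ⬝ᵥ A *ᵥ n = z * Q n := by
      intro x y z
      have := hBexp x y z 0 0 1
      simpa using this
    have hc2 : c 2 = 0 := by
      have t := hBinv g n
      rw [hn, hc, en, dgn] at t
      exact (mul_eq_zero.mp t).resolve_right hQn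
    have hc'2 : c' 2 = 0 := by
      have t := hBinv h n
      rw [hn, hc', en, dhn] at t
      exact (mul_eq_zero.mp t).resolve_right hQn
    rw [hc2, zero_smul, add_zero] at hc
    rw [hc'2, zero_smul, add_zero] at hc'
    have E1 : c 0 ^ 2 + α * c 1 ^ 2 = 1 := by
      have t := hBinv g g
      rw [hc] at t
      have t2 : (c 0 • g + c 1 • h + (0 : ℚ_[p]) • n) ⬝ᵥ A *ᵥ
          (c 0 • g + c 1 • h + (0 : ℚ_[p]) • n) = g ⬝ᵥ A *ᵥ g := by
        rw [zero_smul, add_zero]; exact t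
      rw [hBexp] at t2
      refine mul_right_cancel₀ hQg ?_
      linear_combination t2 - hQ g - c 1 ^ 2 * hQhα
    have E2 : c' 0 ^ 2 + α * c' 1 ^ 2 = α := by
      have t := hBinv h h
      rw [hc'] at t
      have t2 : (c' 0 • g + c' 1 • h + (0 : ℚ_[p]) • n) ⬝ᵥ A *ᵥ
          (c' 0 • g + c' 1 • h + (0 : ℚ_[p]) • n) = h ⬝ᵥ A *ᵥ h := by
        rw [zero_smul, add_zero]; exact t
      rw [hBexp] at t2
      refine mul_right_cancel₀ hQg ?_
      linear_combination t2 - hQ h - c' 1 ^ 2 * hQhα + hQhα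
    have E3 : c 0 * c' 0 + α * c 1 * c' 1 = 0 := by
      have t := hBinv g h
      rw [hc, hc'] at t
      have t2 : (c 0 • g + c 1 • h + (0 : ℚ_[p]) • n) ⬝ᵥ A *ᵥ
          (c' 0 • g + c' 1 • h + (0 : ℚ_[p]) • n) = g ⬝ᵥ A *ᵥ h := by
        simp only [zero_smul, add_zero]; exact t
      rw [hBexp] at t2
      refine mul_right_cancel₀ hQg ?_
      linear_combination t2 + dgh - c 1 * c' 1 * hQhα
    set M : Matrix (Fin 3) (Fin 3) ℚ_[p] :=
      Matrix.of ![![c 0, c' 0, 0], ![c 1, c' 1, 0], ![0, 0, 1]] with hM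
    have hMg : M *ᵥ Pi.single 0 1 = ![c 0, c 1, 0] := by
      funext i
      fin_cases i <;>
        simp [hM, Matrix.mulVec, dotProduct, Fin.sum_univ_three, Pi.single_apply,
          Matrix.vecHead, Matrix.vecTail]
    have hMh : M *ᵥ Pi.single 1 1 = ![c' 0, c' 1, 0] := by
      funext i
      fin_cases i <;>
        simp [hM, Matrix.mulVec, dotProduct, Fin.sum_univ_three, Pi.single_apply,
          Matrix.vecHead, Matrix.vecTail]
    have hMn : M *ᵥ Pi.single 2 1 = Pi.single 2 1 := by
      funext i
      fin_cases i <;>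
        simp [hM, Matrix.mulVec, dotProduct, Fin.sum_univ_three, Pi.single_apply,
          Matrix.vecHead, Matrix.vecTail]
    have hLS : L * S = S * M := by
      apply matext
      intro j
      rw [← Matrix.mulVec_mulVec, ← Matrix.mulVec_mulVec]
      fin_cases j
      · show L *ᵥ S *ᵥ Pi.single 0 1 = S *ᵥ M *ᵥ Pi.single 0 1
        rw [hSg, hMg, hc, hSmul]
        simp [Matrix.vecHead, Matrix.vecTail]
      · show L *ᵥ S *ᵥ Pi.single 1 1 = S *ᵥ M *ᵥ Pi.single 1 1
        rw [hSh, hMh, hc', hSmul]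
        simp [Matrix.vecHead, Matrix.vecTail]
      · show L *ᵥ S *ᵥ Pi.single 2 1 = S *ᵥ M *ᵥ Pi.single 2 1
        rw [hSn, hMn, hn, hSn]
    have hdetM : M.det = 1 := by
      have hd := congrArg Matrix.det hLS
      rw [Matrix.det_mul, Matrix.det_mul, hdetL, one_mul] at hd
      exact (mul_left_cancel₀ hdetSne (by rw [mul_one]; exact hd)).symm
    have E4 : c 0 * c' 1 - c 1 * c' 0 = 1 := by
      have hdM2 : M.det = c 0 * c' 1 - c 1 * c' 0 := by
        simp [hM, Matrix.det_fin_three, Matrix.vecHead, Matrix.vecTail]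
        ring
      exact hdM2.symm.trans hdetM
    have E5 : c' 1 = c 0 := by
      linear_combination (-(c' 1)) * E1 + c 0 * E4 + c 1 * E3
    have E6 : c' 0 = -α * c 1 := by
      linear_combination c 0 * E3 - α * c 1 * E4 - c' 0 * E1
    by_cases hA1 : c 0 = -1
    · -- reflection case
      have hc1 : c 1 = 0 := by
        have hq : α * c 1 ^ 2 = 0 := by linear_combination E1 + (1 - c 0) * hA1
        have hsq := (mul_eq_zero.mp hq).resolve_left hαne
        exact pow_eq_zero_iff (n := 2) (by norm_num) |>.mp hsq
      have hLg : L *ᵥ g = -g := by rw [hc, hA1, hc1]; module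
      have hLh : L *ᵥ h = -h := by rw [hc', E5, E6, hA1, hc1]; module
      refine Or.inl ⟨⟨hLg, hLh⟩, ?_⟩
      rintro ⟨σ, ⟨hσne, hσg, hσh⟩, -⟩
      have hcmp := uniq ((1 - α * σ ^ 2) / (1 + α * σ ^ 2)) (2 * σ / (1 + α * σ ^ 2)) 0
        (-1) 0 0 (by
          simp only [zero_smul, add_zero]
          rw [← hσg, hLg]
          module)
      have hAval := hcmp.1
      rw [div_eq_iff hσne] at hAval
      have h20 : (2 : ℚ_[p]) = 0 := by linear_combination hAval
      exact two_ne_zero h20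
    · -- rotation case
      have h1a : 1 + c 0 ≠ 0 := by
        intro h0; exact hA1 (by linear_combination h0)
      set σ0 : ℚ_[p] := c 1 / (1 + c 0) with hσ0
      have hαb : α * c 1 ^ 2 = 1 - c 0 ^ 2 := by linear_combination E1
      have hden : 1 + α * σ0 ^ 2 = 2 / (1 + c 0) := by
        rw [hσ0, eq_div_iff h1a]
        field_simp
        linear_combination hαb
      have hnum : 1 - α * σ0 ^ 2 = 2 * c 0 / (1 + c 0) := by
        rw [hσ0, eq_div_iff h1a]
        field_simp
        linear_combination -hαb
      have hAval : (1 - α * σ0 ^ 2) / (1 + α * σ0 ^ 2) = c 0 := by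
        rw [div_eq_iff (hplus σ0), hnum, hden]
        field_simp [h1a]
      have hBval : 2 * σ0 / (1 + α * σ0 ^ 2) = c 1 := by
        rw [div_eq_iff (hplus σ0), hσ0, hden]
        field_simp [h1a]
      have hDval : -(2 * α * σ0) / (1 + α * σ0 ^ 2) = c' 0 := by
        rw [div_eq_iff (hplus σ0), hσ0, hden, E6]
        field_simp [h1a]
      refine Or.inr ⟨⟨σ0, ⟨hplus σ0, ?_, ?_⟩, ?_⟩, ?_⟩
      · rw [hAval, hBval]; exact hc
      · rw [hAval, hDval, hc', E5]
      · rintro σ' ⟨hσ'ne, hσ'g, hσ'h⟩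
        have hcmp := uniq ((1 - α * σ' ^ 2) / (1 + α * σ' ^ 2)) (2 * σ' / (1 + α * σ' ^ 2)) 0
          (c 0) (c 1) 0 (by
            simp only [zero_smul, add_zero]
            rw [← hσ'g, hc])
        have hA2 := hcmp.1
        have hB2 := hcmp.2.1
        rw [div_eq_iff hσ'ne] at hA2 hB2
        rw [hσ0, eq_div_iff h1a]
        have hz2 : (σ' * (1 + c 0) - c 1) * (1 + α * σ' ^ 2) = 0 := by
          linear_combination (-σ') * hA2 + hB2
        have hfin := (mul_eq_zero.mp hz2).resolve_right hσ'ne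
        linear_combination hfin
      · rintro ⟨hLg, -⟩
        have hcmp := uniq (c 0) (c 1) 0 (-1) 0 0 (by
          simp only [zero_smul, add_zero]
          rw [← hc, hLg]
          module)
        exact hA1 hcmp.1
  · -- rotations exist
    intro σ
    have hx := hplus σ
    obtain ⟨L, hL1, hL2, hL3, hL4, hL5⟩ :=
      build ((1 - α * σ ^ 2) / (1 + α * σ ^ 2)) (2 * σ / (1 + α * σ ^ 2))
        (-(2 * α * σ) / (1 + α * σ ^ 2)) ((1 - α * σ ^ 2) / (1 + α * σ ^ 2))
        (by field_simp; ring) (by field_simp; ring) (by field_simp; ring)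
        (by field_simp; ring)
    exact ⟨L, hL1, hL2, hL3, hL4, hL5⟩
  · -- the reflection exists
    obtain ⟨L, hL1, hL2, hL3, hL4, hL5⟩ :=
      build (-1) 0 0 (-1) (by ring_nf) (by ring_nf) (by ring) (by ring_nf)
    refine ⟨L, hL1, hL2, hL3, ?_, ?_⟩
    · rw [hL4]; module
    · rw [hL5]; module
end

section
/- Let p be an odd prime, let u ∈ ℚ_p be a p-adic unit that is not a square in ℚ_p, set v = −u if p ≡ 1 (mod 4) and v = −1 if p ≡ 3 (mod 4), and let Q_+(x) = x₁² − v x₂² + p x₃² on ℚ_p³. Then for every α in the set {−v, p, u·p}, there exist a nonzero vector n ∈ ℚ_p³ and a nonzero scalar s ∈ ℚ_p such that Q_+(n) = −v·p·α·s². (Consequently, every equivalence class of definite binary quadratic forms over ℚ_p is realized, up to equivalence and scaling, as the restriction of Q_+ to the plane orthogonal to some axis n.) -/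
open Matrix

private lemma norm_one_iff_toZMod_ne_zero {p : ℕ} [Fact p.Prime] (c : ℤ_[p]) :
    ‖c‖ = 1 ↔ PadicInt.toZMod c ≠ 0 := by
  constructor
  · intro hc h
    have hk : c ∈ IsLocalRing.maximalIdeal ℤ_[p] := by
      rw [← PadicInt.ker_toZMod]; exact h
    rw [IsLocalRing.mem_maximalIdeal, PadicInt.mem_nonunits] at hk
    rw [hc] at hk; exact lt_irrefl 1 hk
  · intro h
    rcases lt_or_eq_of_le (PadicInt.norm_le_one c) with hlt | heq
    · exfalso
      apply h
      have : c ∈ IsLocalRing.maximalIdeal ℤ_[p] := by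
        rw [IsLocalRing.mem_maximalIdeal, PadicInt.mem_nonunits]; exact hlt
      rw [← PadicInt.ker_toZMod] at this; exact this
    · exact heq

private lemma padic_sq_lift {p : ℕ} [Fact p.Prime] (hp : p ≠ 2) (c : ℤ_[p])
    (h0 : PadicInt.toZMod c ≠ 0) (hsq : IsSquare (PadicInt.toZMod c)) :
    ∃ t : ℤ_[p], t ^ 2 = c := by
  obtain ⟨r, hr⟩ := hsq
  have hr0 : r ≠ 0 := by rintro rfl; rw [mul_zero] at hr; exact h0 hr
  set a : ℤ_[p] := ((ZMod.val r : ℕ) : ℤ_[p]) with ha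
  have har : PadicInt.toZMod a = r := by
    rw [ha, map_natCast, ZMod.natCast_val, ZMod.cast_id]
  set F : Polynomial ℤ_[p] := Polynomial.X ^ 2 - Polynomial.C c with hF
  have hFa : F.eval a = a ^ 2 - c := by simp [hF]
  have hFd : F.derivative.eval a = 2 * a := by
    simp [hF]; norm_num
  have h2r : (2 : ZMod p) * r ≠ 0 := by
    apply mul_ne_zero _ hr0
    have : ((2 : ℕ) : ZMod p) ≠ 0 := by
      rw [Ne, ZMod.natCast_eq_zero_iff]
      intro hd
      exact hp ((Nat.prime_dvd_prime_iff_eq (Fact.out) Nat.prime_two).mp hd)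
    simpa using this
  have hd1 : ‖F.derivative.eval a‖ = 1 := by
    rw [hFd, norm_one_iff_toZMod_ne_zero]
    rw [_root_.map_mul, har]
    have h2 : PadicInt.toZMod (2 : ℤ_[p]) = 2 := by
      rw [show ((2 : ℤ_[p])) = ((2 : ℕ) : ℤ_[p]) by norm_num, map_natCast]
      norm_num
    rw [h2]
    exact h2r
  have hlt : ‖F.eval a‖ < 1 := by
    have hker : PadicInt.toZMod (F.eval a) = 0 := by
      rw [hFa, map_sub, map_pow, har, hr]; ring
    rcases lt_or_eq_of_le (PadicInt.norm_le_one (F.eval a)) with h | h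
    · exact h
    · exfalso; exact (norm_one_iff_toZMod_ne_zero _).mp h hker
  have hnorm : ‖F.eval a‖ < ‖F.derivative.eval a‖ ^ 2 := by
    rw [hd1]; simpa using hlt
  obtain ⟨z, hz, -⟩ := hensels_lemma hnorm
  refine ⟨z, ?_⟩
  have := hz
  rw [hF] at this
  simpa [sub_eq_zero] using this

private lemma qp_isSquare_of_residue {p : ℕ} [Fact p.Prime] (hp : p ≠ 2) (c : ℚ_[p]) (hc : ‖c‖ ≤ 1)
    (h0 : PadicInt.toZMod (⟨c, hc⟩ : ℤ_[p]) ≠ 0)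
    (hsq : IsSquare (PadicInt.toZMod (⟨c, hc⟩ : ℤ_[p]))) : IsSquare c := by
  obtain ⟨t, ht⟩ := padic_sq_lift hp _ h0 hsq
  refine ⟨(t : ℚ_[p]), ?_⟩
  have := congrArg (fun x : ℤ_[p] => (x : ℚ_[p])) ht
  push_cast at this
  rw [← this]; ring

private lemma qp_residue_not_square {p : ℕ} [Fact p.Prime] (hp : p ≠ 2) (c : ℚ_[p]) (hc : ‖c‖ ≤ 1)
    (hns : ¬ IsSquare c) (h0 : PadicInt.toZMod (⟨c, hc⟩ : ℤ_[p]) ≠ 0) :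
    ¬ IsSquare (PadicInt.toZMod (⟨c, hc⟩ : ℤ_[p])) :=
  fun hsq => hns (qp_isSquare_of_residue hp c hc h0 hsq)

/-- For `p` odd, `u` a non-square p-adic unit, and `v = -u` for
`p ≡ 1 (mod 4)`, `v = -1` for `p ≡ 3 (mod 4)`, every `α ∈ {-v, p, u·p}` is
realized: there are a nonzero vector `n ∈ ℚ_p³` and a nonzero scalar `s` with
`Q₊(n) = -v·p·α·s²`. -/
theorem all_axis_classes_realized
    (p : ℕ) [Fact p.Prime] (hp : p ≠ 2)
    (u : ℚ_[p]) (hu : ‖u‖ = 1) (husq : ¬ IsSquare u)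
    (v : ℚ_[p])
    (hv1 : p % 4 = 1 → v = -u) (hv3 : p % 4 = 3 → v = -1)
    (Q : (Fin 3 → ℚ_[p]) → ℚ_[p])
    (hQ : ∀ x : Fin 3 → ℚ_[p], Q x = x 0 ^ 2 - v * x 1 ^ 2 + (p : ℚ_[p]) * x 2 ^ 2) :
    ∀ α ∈ ({-v, (p : ℚ_[p]), u * (p : ℚ_[p])} : Set ℚ_[p]),
      ∃ n : Fin 3 → ℚ_[p], n ≠ 0 ∧
        ∃ s : ℚ_[p], s ≠ 0 ∧ Q n = -v * (p : ℚ_[p]) * α * s ^ 2 := by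
  intro α hα
  have hpp : p.Prime := Fact.out
  have hpodd : p % 2 = 1 := Nat.odd_iff.mp (hpp.odd_of_ne_two hp)
  have hp4 : p % 4 = 1 ∨ p % 4 = 3 := by omega
  have hu0 : u ≠ 0 := by intro h; rw [h, norm_zero] at hu; norm_num at hu
  have hv0 : v ≠ 0 := by
    rcases hp4 with h | h
    · rw [hv1 h]; simpa using hu0
    · rw [hv3 h]; norm_num
  have hp0 : (p : ℚ_[p]) ≠ 0 := Nat.cast_ne_zero.mpr hpp.ne_zero
  simp only [Set.mem_insert_iff, Set.mem_singleton_iff] at hα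
  rcases hα with rfl | rfl | rfl
  · refine ⟨![0, 0, v], ?_, 1, one_ne_zero, ?_⟩
    · intro h; exact hv0 (by simpa using congrFun h 2)
    · rw [hQ]; simp; ring
  · refine ⟨![0, (p : ℚ_[p]), 0], ?_, 1, one_ne_zero, ?_⟩
    · intro h; exact hp0 (by simpa using congrFun h 1)
    · rw [hQ]; simp; ring
  · rcases hp4 with h4 | h4
    · -- p ≡ 1 mod 4 : v = -u
      refine ⟨![u * (p : ℚ_[p]), 0, 0], ?_, 1, one_ne_zero, ?_⟩
      · intro h
        exact (mul_ne_zero hu0 hp0) (by simpa using congrFun h 0)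
      · rw [hQ, hv1 h4]; simp; ring
    · -- p ≡ 3 mod 4 : v = -1
      have hv : v = -1 := hv3 h4
      have hule : ‖u‖ ≤ 1 := le_of_eq hu
      -- residue of u is a nonzero nonsquare
      set uZ : ℤ_[p] := ⟨u, hule⟩ with huZ
      have hub0 : PadicInt.toZMod uZ ≠ 0 := by
        apply (norm_one_iff_toZMod_ne_zero uZ).mp
        rw [PadicInt.norm_def]; exact hu
      have hubnsq : ¬ IsSquare (PadicInt.toZMod uZ) :=
        qp_residue_not_square hp u hule husq hub0
      -- -1 is not a square mod p
      have hneg1 : ¬ IsSquare (-1 : ZMod p) := by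
        rw [ZMod.exists_sq_eq_neg_one_iff]
        simpa using h4
      -- hence -ubar is a square mod p
      set ubar := PadicInt.toZMod uZ with hubardef
      have hchu : quadraticChar (ZMod p) ubar = -1 :=
        quadraticChar_neg_one_iff_not_isSquare.mpr hubnsq
      have hchn : quadraticChar (ZMod p) (-1) = -1 :=
        quadraticChar_neg_one_iff_not_isSquare.mpr hneg1
      have hch : quadraticChar (ZMod p) (-ubar) = 1 := by
        have : (-ubar) = (-1) * ubar := by ring
        rw [this, _root_.map_mul, hchn, hchu]; norm_num
      have hnegu_sq : IsSquare (-ubar) :=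
        (quadraticChar_one_iff_isSquare (neg_ne_zero.mpr hub0)).mp hch
      -- lift : -u is a square in ℚ_p
      have hnule : ‖-u‖ ≤ 1 := by rw [norm_neg]; exact hule
      have hkey : PadicInt.toZMod (-uZ) = -ubar := by rw [map_neg]
      have hnegu : IsSquare (-u) := by
        apply qp_isSquare_of_residue hp (-u) hnule
        · exact (show PadicInt.toZMod (-uZ) ≠ 0 by
            rw [hkey]; exact neg_ne_zero.mpr hub0)
        · exact (show IsSquare (PadicInt.toZMod (-uZ)) by
            rw [hkey]; exact hnegu_sq)
      obtain ⟨w, hw⟩ := hnegu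
      have hw0 : w ≠ 0 := by
        intro h; rw [h, mul_zero] at hw
        exact hu0 (neg_eq_zero.mp hw)
      -- -1 = a₀² + b₀² in ZMod p
      obtain ⟨a₀, b₀, hab⟩ := ZMod.sq_add_sq p (-1 : ZMod p)
      have ha₀ : a₀ ≠ 0 := by
        intro h
        apply hneg1
        rw [h] at hab
        exact ⟨b₀, by rw [← hab]; ring⟩
      -- lift to ℤ_p : t² + B² = -1
      set B : ℤ_[p] := ((ZMod.val b₀ : ℕ) : ℤ_[p]) with hB
      set c : ℤ_[p] := -1 - B ^ 2 with hc
      have hcres : PadicInt.toZMod c = a₀ ^ 2 := by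
        rw [hc, _root_.map_sub, _root_.map_neg, _root_.map_one, _root_.map_pow, hB, map_natCast,
          ZMod.natCast_val, ZMod.cast_id]
        have : b₀ ^ 2 = -1 - a₀ ^ 2 := by rw [← hab]; ring
        rw [this]; ring
      have hc0 : PadicInt.toZMod c ≠ 0 := by
        rw [hcres]; exact pow_ne_zero 2 ha₀
      obtain ⟨t, ht⟩ := padic_sq_lift hp c (by rw [hcres]; exact pow_ne_zero 2 ha₀)
        (by rw [hcres]; exact ⟨a₀, sq a₀⟩)
      have ht0 : t ≠ 0 := by
        intro h; rw [h] at ht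
        apply hc0; rw [← ht]; simp
      -- push to ℚ_p
      have hTB : (t : ℚ_[p]) ^ 2 + (B : ℚ_[p]) ^ 2 = -1 := by
        have := congrArg (fun x : ℤ_[p] => (x : ℚ_[p])) ht
        push_cast at this
        rw [this]; push_cast [hc]; ring
      refine ⟨![(t : ℚ_[p]) * w * (p : ℚ_[p]), (B : ℚ_[p]) * w * (p : ℚ_[p]), 0],
        ?_, 1, one_ne_zero, ?_⟩
      · intro h
        have h0 : (t : ℚ_[p]) * w * (p : ℚ_[p]) = 0 := by simpa using congrFun h 0
        have ht0' : (t : ℚ_[p]) ≠ 0 := fun hh => ht0 ((PadicInt.coe_eq_zero).mp hh)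
        exact (mul_ne_zero (mul_ne_zero ht0' hw0) hp0) h0
      · rw [hQ, hv]
        simp only [Matrix.cons_val_zero, Matrix.cons_val_one, Matrix.head_cons]
        have h2 : (![(t : ℚ_[p]) * w * (p : ℚ_[p]), (B : ℚ_[p]) * w * (p : ℚ_[p]), 0] : Fin 3 → ℚ_[p]) 2 = 0 := rfl
        rw [h2]
        have hu' : u = -(w * w) := by rw [← hw]; ring
        rw [hu']
        have : ((t : ℚ_[p]) * w * (p : ℚ_[p])) ^ 2 - (-1) * ((B : ℚ_[p]) * w * (p : ℚ_[p])) ^ 2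
            = ((t : ℚ_[p]) ^ 2 + (B : ℚ_[p]) ^ 2) * w ^ 2 * (p : ℚ_[p]) ^ 2 := by ring
        rw [this, hTB]; ring
end
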